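/- arXiv:2003.06178 — 3 statements merged into one kernel-verified Lean document; each statement's English description precedes it below -/
import Mathlib

section
/- Let D be a digraph and X, Y vertex sets (vertices of X with no ingoing edges, vertices of Y with no outgoing edges). Suppose there exist x ∈ X and y ∈ Y such that X−x is incompressible to Y−y in D, and suppose X is joinable to Y in D. Then X is incompressible to Y in D. -/
/-!  Common framework: digraphs as edge sets on a vertex type, directed paths,
path-systems, separations, flames and largeness. -/

universe u

variable {V : Type u}

/-- A directed path in the digraph on `V` with edge set `E`, given by its
(nonempty, repetition-free) list of vertices `start :: rest`. -/
structure Dipath (E : Set (V × V)) : Type u where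
  start : V
  rest : List V
  chain : List.Chain (fun a b => (a, b) ∈ E) start rest
  nodup : (start :: rest).Nodup

namespace Dipath

variable {E : Set (V × V)}

/-- The list of vertices of the path. -/
def verts (p : Dipath E) : List V := p.start :: p.rest

/-- The terminal vertex of the path. -/
def last (p : Dipath E) : V := (p.start :: p.rest).getLast (List.cons_ne_nil _ _)

/-- The set of vertices of the path. -/
def support (p : Dipath E) : Set V := {v | v ∈ p.verts}

/-- The internal vertices of the path (all vertices except the first and the last). -/
def internal (p : Dipath E) : Set V := {v | v ∈ p.rest.dropLast}

/-- The list of (directed) edges of the path. -/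
def edges (p : Dipath E) : List (V × V) := p.verts.zip p.rest

/-- The set of edges of the path. -/
def edgeSet (p : Dipath E) : Set (V × V) := {e | e ∈ p.edges}

/-- The last edge of the path, if the path has at least one edge. -/
def lastEdge? (p : Dipath E) : Option (V × V) := p.edges.getLast?

end Dipath

section Defs

variable (E : Set (V × V))

/-- The set of ingoing edges of `v`. -/
def inEdges (v : V) : Set (V × V) := {e ∈ E | e.2 = v}

/-- The set of initial vertices of a set of paths. -/
def initVerts {E : Set (V × V)} (P : Set (Dipath E)) : Set V := Dipath.start '' P

/-- The set of terminal vertices of a set of paths. -/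
def termVerts {E : Set (V × V)} (P : Set (Dipath E)) : Set V := Dipath.last '' P

/-- The set of terminal edges of a set of paths. -/
def termEdges {E : Set (V × V)} (P : Set (Dipath E)) : Set (V × V) :=
  {e | ∃ p ∈ P, p.lastEdge? = some e}

/-- An `(r,v)`-path-system: a set of pairwise internally disjoint directed
paths from `r` to `v`. -/
def IsRVSystem (r v : V) (P : Set (Dipath E)) : Prop :=
  (∀ p ∈ P, p.start = r ∧ p.last = v) ∧
    P.Pairwise fun p q => p.support ∩ q.support ⊆ {r, v}

/-- An `(r,v)`-separation: a set of vertices avoiding `r` and `v` and meeting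
every directed path from `r` to `v`. -/
def IsSeparation (r v : V) (S : Set V) : Prop :=
  r ∉ S ∧ v ∉ S ∧ ∀ p : Dipath E, p.start = r → p.last = v → (p.support ∩ S).Nonempty

/-- A set of paths `P` and a vertex set `S` are orthogonal:  every path of `P`
meets `S` in exactly one vertex and every vertex of `S` lies on a path of `P`. -/
def Orthogonal {E : Set (V × V)} (P : Set (Dipath E)) (S : Set V) : Prop :=
  (∀ p ∈ P, ∃! x, x ∈ p.support ∩ S) ∧ ∀ x ∈ S, ∃ p ∈ P, x ∈ p.support

/-- An Erdős–Menger `(r,v)`-path-system: one orthogonal to some `(r,v)`-separation. -/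
def IsEMSystem (r v : V) (P : Set (Dipath E)) : Prop :=
  IsRVSystem E r v P ∧ ∃ S, IsSeparation E r v S ∧ Orthogonal P S

/-- An Erdős–Menger `(r,v)`-separation: one orthogonal to some `(r,v)`-path-system. -/
def IsEMSeparation (r v : V) (S : Set V) : Prop :=
  IsSeparation E r v S ∧ ∃ P : Set (Dipath E), IsRVSystem E r v P ∧ Orthogonal P S

/-- `𝒢_E(v)` (with root `r`): the collection of edge sets `I` that arise as the set of
terminal edges of an internally disjoint `(r,v)`-path-system in `E`. -/
def GSet (r v : V) : Set (Set (V × V)) :=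
  {I | ∃ P : Set (Dipath E), IsRVSystem E r v P ∧ termEdges P = I}

/-- A vertex-flame (with root `r`): for every `v ≠ r`, the whole in-edge set of `v`
is the terminal edge set of an internally disjoint `(r,v)`-path-system. -/
def IsFlame (r : V) : Prop := ∀ v, v ≠ r → inEdges E v ∈ GSet E r v

/-- `L` is `v`-large with respect to the digraph `E` rooted at `r`: `L` contains `rv`
whenever `E` does, and some Erdős–Menger `(r,v)`-path-system of `E - rv` lies in `L`. -/
def VLarge (r : V) (L : Set (V × V)) (v : V) : Prop :=
  ((r, v) ∈ E → (r, v) ∈ L) ∧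
    ∃ P : Set (Dipath (E \ {(r, v)})),
      IsEMSystem (E \ {(r, v)}) r v P ∧ ∀ p ∈ P, p.edgeSet ⊆ L

/-- `L` is large with respect to the digraph `E` rooted at `r`. -/
def Large (r : V) (L : Set (V × V)) : Prop := ∀ v, v ≠ r → VLarge E r L v

/-- An `(X,Y)`-path: from `X` to `Y`, internally disjoint from `X ∪ Y`. -/
def IsXYPath (X Y : Set V) (p : Dipath E) : Prop :=
  p.start ∈ X ∧ p.last ∈ Y ∧ ∀ w ∈ p.internal, w ∉ X ∪ Y

/-- An `(X,Y)`-path-system: pairwise disjoint `(X,Y)`-paths. -/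
def IsXYSystem (X Y : Set V) (P : Set (Dipath E)) : Prop :=
  (∀ p ∈ P, IsXYPath E X Y p) ∧ P.Pairwise fun p q => Disjoint p.support q.support

/-- `X` is joinable to `Y`: some `(X,Y)`-path-system covers `X` with its initial vertices. -/
def Joinable (X Y : Set V) : Prop :=
  ∃ P : Set (Dipath E), IsXYSystem E X Y P ∧ initVerts P = X

/-- `X` is incompressible to `Y`: `X` is joinable to `Y` and every witnessing
path-system covers `Y` with its terminal vertices. -/
def Incompressible (X Y : Set V) : Prop :=
  Joinable E X Y ∧
    ∀ P : Set (Dipath E), IsXYSystem E X Y P → initVerts P = X → termVerts P = Y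

/-- An `(X,Y)`-separation: a vertex set meeting every `(X,Y)`-path. -/
def IsXYSeparation (X Y : Set V) (S : Set V) : Prop :=
  ∀ p : Dipath E, IsXYPath E X Y p → (p.support ∩ S).Nonempty

/-- An Erdős–Menger `(X,Y)`-separation: one orthogonal to some `(X,Y)`-path-system. -/
def IsEMXYSeparation (X Y : Set V) (S : Set V) : Prop :=
  IsXYSeparation E X Y S ∧ ∃ P : Set (Dipath E), IsXYSystem E X Y P ∧ Orthogonal P S

/-- `X'` is `(X,Y)`-finitely extendable: every `O` with `X' ⊆ O ⊆ X` and `O \ X'`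
finite is joinable to `Y`. -/
def FinExtendable (X Y X' : Set V) : Prop :=
  X' ⊆ X ∧ ∀ O, X' ⊆ O → O ⊆ X → (O \ X').Finite → Joinable E O Y

/-- `S` separates the vertex `y` from `r`:  every directed path from `r` to `y` meets `S`. -/
def SeparatesFrom (r : V) (S : Set V) (y : V) : Prop :=
  ∀ p : Dipath E, p.start = r → p.last = y → (p.support ∩ S).Nonempty

/-- An `(X,y)`-path: from a vertex of `X` to `y`, internally disjoint from `X`. -/
def IsXyPath (X : Set V) (y : V) (p : Dipath E) : Prop :=
  p.start ∈ X ∧ p.last = y ∧ ∀ w ∈ p.internal, w ∉ X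

/-- An `(X,y)`-path-system: `(X,y)`-paths, pairwise disjoint except possibly at `y`. -/
def IsXySystem (X : Set V) (y : V) (P : Set (Dipath E)) : Prop :=
  (∀ p ∈ P, IsXyPath E X y p) ∧ P.Pairwise fun p q => p.support ∩ q.support ⊆ {y}

/-- An `(r,S)`-path: from `r` to a vertex of `S`, internally disjoint from `S`. -/
def IsRSPath (r : V) (S : Set V) (p : Dipath E) : Prop :=
  p.start = r ∧ p.last ∈ S ∧ ∀ w ∈ p.internal, w ∉ S

/-- An `(r,S)`-path-system: `(r,S)`-paths, pairwise disjoint apart from `r`. -/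
def IsRSSystem (r : V) (S : Set V) (P : Set (Dipath E)) : Prop :=
  (∀ p ∈ P, IsRSPath E r S p) ∧ P.Pairwise fun p q => p.support ∩ q.support ⊆ {r}

/-- `E` is a `G`-quasi-flame (with root `r`): for every `v ≠ r`, every set `I` of
ingoing edges of `v` with `I \ inEdges G v` finite lies in `𝒢_E(v)`. -/
def QuasiFlame (r : V) (G : Set (V × V)) : Prop :=
  ∀ v, v ≠ r → ∀ I, I ⊆ inEdges E v → (I \ inEdges G v).Finite → I ∈ GSet E r v

/-- The local connectivity `κ_E(r,v)`: the maximum size of an internally disjoint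
`(r,v)`-path-system. -/
noncomputable def kappa (r v : V) : ℕ :=
  sSup {n | ∃ P : Set (Dipath E), IsRVSystem E r v P ∧ P.Finite ∧ P.ncard = n}

end Defs

namespace StmtAux

open List

variable {V : Type u} {E : Set (V × V)}

/-- splitting a list at the first element belonging to `U`. -/
theorem split_first {l : List V} {U : Set V} (h : ∃ a ∈ l, a ∈ U) :
    ∃ l₁ v l₂, l = l₁ ++ v :: l₂ ∧ v ∈ U ∧ ∀ a ∈ l₁, a ∉ U := by
  induction l with
  | nil => obtain ⟨a, ha, _⟩ := h; exact absurd ha List.not_mem_nil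
  | cons b t ih =>
    by_cases hb : b ∈ U
    · exact ⟨[], b, t, rfl, hb, by simp⟩
    · have : ∃ a ∈ t, a ∈ U := by
        obtain ⟨a, ha, haU⟩ := h
        rcases List.mem_cons.mp ha with rfl | ha'
        · exact absurd haU hb
        · exact ⟨a, ha', haU⟩
      obtain ⟨l₁, v, l₂, rfl, hvU, hl₁⟩ := ih this
      exact ⟨b :: l₁, v, l₂, rfl, hvU, by
        intro a ha
        rcases List.mem_cons.mp ha with rfl | ha'
        · exact hb
        · exact hl₁ a ha'⟩

theorem takeUntil_eq {l₁ l₂ : List V} {v : V} [DecidableEq V] (hv : v ∉ l₁) :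
    (l₁ ++ v :: l₂).takeWhile (· ≠ v) = l₁ := by
  induction l₁ with
  | nil => simp [List.takeWhile]
  | cons b t ih =>
    have hb : b ≠ v := fun h => hv (h ▸ (List.mem_cons_self : b ∈ b :: t))
    have ht : v ∉ t := fun h => hv (List.mem_cons_of_mem _ h)
    simp only [List.cons_append, List.takeWhile_cons, decide_eq_true_eq]
    rw [if_pos hb, ih ht]

theorem chain_pred {R : V → V → Prop} :
    ∀ {a : V} {l : List V}, List.Chain R a l → ∀ b ∈ l, ∃ u, R u b := by
  intro a l
  induction l generalizing a with
  | nil => intro _ b hb; exact absurd hb List.not_mem_nil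
  | cons c t ih =>
    intro h b hb
    rcases List.chain_cons.mp h with ⟨hac, hct⟩
    rcases List.mem_cons.mp hb with rfl | hb'
    · exact ⟨a, hac⟩
    · exact ih hct b hb'

theorem chain'_succ {R : V → V → Prop} :
    ∀ {l : List V}, List.Chain' R l → ∀ b ∈ l.dropLast, ∃ u, R b u := by
  intro l
  induction l with
  | nil => intro _ b hb; simp at hb
  | cons a t ih =>
    intro h b hb
    cases t with
    | nil => simp at hb
    | cons c t' =>
      rw [List.dropLast_cons₂] at hb
      rcases List.mem_cons.mp hb with rfl | hb'
      · exact ⟨c, (List.isChain_cons_cons.mp h).1⟩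
      · exact ih (List.isChain_cons_cons.mp h).2 b hb'

end StmtAux
namespace StmtAux

open List

variable {V : Type u} {E : Set (V × V)}

theorem verts_ne_nil (p : Dipath E) : p.verts ≠ [] := List.cons_ne_nil _ _

theorem chain'_verts (p : Dipath E) :
    List.Chain' (fun a b => (a, b) ∈ E) p.verts := p.chain

theorem start_mem_verts (p : Dipath E) : p.start ∈ p.verts := List.mem_cons_self

theorem last_eq_getLast (p : Dipath E) : p.last = p.verts.getLast (verts_ne_nil p) := rfl

theorem last_mem_verts (p : Dipath E) : p.last ∈ p.verts := by
  rw [last_eq_getLast]; exact List.getLast_mem _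

theorem mem_support_iff {p : Dipath E} {a : V} : a ∈ p.support ↔ a ∈ p.verts := Iff.rfl

theorem head_verts (p : Dipath E) : p.verts.head (verts_ne_nil p) = p.start := rfl

theorem head?_verts (p : Dipath E) : p.verts.head? = some p.start := rfl

/-- every vertex in `rest` has an ingoing edge -/
theorem rest_in_edge (p : Dipath E) {w : V} (hw : w ∈ p.rest) : ∃ u, (u, w) ∈ E :=
  chain_pred p.chain w hw

/-- every vertex except the last has an outgoing edge -/
theorem dropLast_out_edge (p : Dipath E) {w : V} (hw : w ∈ p.verts.dropLast) :
    ∃ u, (w, u) ∈ E :=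
  chain'_succ (chain'_verts p) w hw

theorem mem_X_eq_start {X : Set V} (hX : ∀ e ∈ E, e.2 ∉ X) (p : Dipath E) {z : V}
    (hz : z ∈ X) (hmem : z ∈ p.verts) : z = p.start := by
  rcases List.mem_cons.mp hmem with h | h
  · exact h
  · obtain ⟨u, hu⟩ := rest_in_edge p h
    exact absurd hz (hX _ hu)

theorem mem_Y_eq_last {Y : Set V} (hY : ∀ e ∈ E, e.1 ∉ Y) (p : Dipath E) {z : V}
    (hz : z ∈ Y) (hmem : z ∈ p.verts) : z = p.last := by
  have hsplit : p.verts.dropLast ++ [p.verts.getLast (verts_ne_nil p)] = p.verts :=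
    List.dropLast_append_getLast _
  rw [← hsplit] at hmem
  rcases List.mem_append.mp hmem with h | h
  · obtain ⟨u, hu⟩ := dropLast_out_edge p h
    exact absurd hz (hY _ hu)
  · rw [List.mem_singleton] at h; exact h

theorem internal_in_out (p : Dipath E) {w : V} (hw : w ∈ p.internal) :
    (∃ u, (u, w) ∈ E) ∧ ∃ u, (w, u) ∈ E := by
  have h1 : w ∈ p.rest := (List.dropLast_sublist _).mem hw
  have h2 : w ∈ p.verts.dropLast := by
    cases hr : p.rest with
    | nil => rw [Dipath.internal, hr] at hw; simp at hw
    | cons c t =>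
      have : p.verts.dropLast = p.start :: p.rest.dropLast := by
        rw [Dipath.verts, hr, List.dropLast_cons₂]
      rw [this]
      exact List.mem_cons_of_mem _ hw
  exact ⟨rest_in_edge p h1, dropLast_out_edge p h2⟩

theorem isXYPath_of {X Y X' Y' : Set V} (hX : ∀ e ∈ E, e.2 ∉ X) (hY : ∀ e ∈ E, e.1 ∉ Y)
    (hX' : X' ⊆ X) (hY' : Y' ⊆ Y) {p : Dipath E}
    (hs : p.start ∈ X') (hl : p.last ∈ Y') : IsXYPath E X' Y' p := by
  refine ⟨hs, hl, fun w hw => ?_⟩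
  obtain ⟨⟨u, hu⟩, ⟨u', hu'⟩⟩ := internal_in_out p hw
  rintro (hwX | hwY)
  · exact hX _ hu (hX' hwX)
  · exact hY _ hu' (hY' hwY)

theorem verts_inj {p q : Dipath E} (h : p.verts = q.verts) : p = q := by
  cases p; cases q
  simp only [Dipath.verts, List.cons.injEq] at h
  obtain ⟨h1, h2⟩ := h
  subst h1; subst h2; rfl

/-- build a path from a good list -/
def mkPath (l : List V) (h1 : l ≠ []) (h2 : List.Chain' (fun a b => (a, b) ∈ E) l)
    (h3 : l.Nodup) : Dipath E :=
  ⟨l.head h1, l.tail, by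
      have := h2
      rwa [← List.cons_head_tail h1] at this
    , by rw [List.cons_head_tail h1]; exact h3⟩

theorem mkPath_verts (l : List V) (h1 h2 h3) :
    (mkPath (E := E) l h1 h2 h3).verts = l := List.cons_head_tail h1

theorem mkPath_start (l : List V) (h1 h2 h3) :
    (mkPath (E := E) l h1 h2 h3).start = l.head h1 := rfl

theorem mkPath_last (l : List V) (h1 h2 h3) :
    (mkPath (E := E) l h1 h2 h3).last = l.getLast h1 := by
  rw [last_eq_getLast]
  congr 1
  exact mkPath_verts l h1 h2 h3

/-- distinct paths in a pairwise-disjoint system share no vertex -/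
theorem pairwise_not_mem {P : Set (Dipath E)}
    (hdisj : P.Pairwise fun p q => Disjoint p.support q.support)
    {p q : Dipath E} (hp : p ∈ P) (hq : q ∈ P) (hne : p ≠ q) {a : V}
    (ha : a ∈ p.verts) : a ∉ q.verts := by
  intro ha'
  exact Set.disjoint_left.mp (hdisj hp hq hne) ha ha'

theorem start_inj {P : Set (Dipath E)}
    (hdisj : P.Pairwise fun p q => Disjoint p.support q.support)
    {p q : Dipath E} (hp : p ∈ P) (hq : q ∈ P) (h : p.start = q.start) : p = q := by
  by_contra hne
  exact pairwise_not_mem hdisj hp hq hne (start_mem_verts p)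
    (h ▸ start_mem_verts q)

theorem last_inj {P : Set (Dipath E)}
    (hdisj : P.Pairwise fun p q => Disjoint p.support q.support)
    {p q : Dipath E} (hp : p ∈ P) (hq : q ∈ P) (h : p.last = q.last) : p = q := by
  by_contra hne
  exact pairwise_not_mem hdisj hp hq hne (last_mem_verts p) (h ▸ last_mem_verts q)

theorem mem_initVerts {P : Set (Dipath E)} {z : V} :
    z ∈ initVerts P ↔ ∃ p ∈ P, p.start = z := by
  simp [initVerts, Set.mem_image]

theorem mem_termVerts {P : Set (Dipath E)} {z : V} :
    z ∈ termVerts P ↔ ∃ p ∈ P, p.last = z := by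
  simp [termVerts, Set.mem_image]

end StmtAux
namespace StmtAux

open List

/-- The data of the "hard case" of the theorem: a system `P` witnessing joinability
of `X` to `Y` whose path `q` ending at `y` does not start at `x`, a vertex
`ystar ∈ Y` not covered by `P`, and a system `T` witnessing joinability of `X-x`
to `Y-y`, together with the incompressibility oracle. -/
structure Setup (V : Type u) where
  E : Set (V × V)
  X : Set V
  Y : Set V
  hX : ∀ e ∈ E, e.2 ∉ X
  hY : ∀ e ∈ E, e.1 ∉ Y
  x : V
  y : V
  xx : V
  ystar : V
  hxX : x ∈ X
  hyY : y ∈ Y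
  P : Set (Dipath E)
  hPpath : ∀ p ∈ P, IsXYPath E X Y p
  hPdisj : P.Pairwise fun p q => Disjoint p.support q.support
  hPinit : initVerts P = X
  px : Dipath E
  q : Dipath E
  hpxP : px ∈ P
  hpxs : px.start = x
  hqP : q ∈ P
  hql : q.last = y
  hqs : q.start = xx
  hxxne : xx ≠ x
  hystarY : ystar ∈ Y
  hystar : ystar ∉ termVerts P
  T : Set (Dipath E)
  hTpath : ∀ p ∈ T, IsXYPath E (X \ {x}) (Y \ {y}) p
  hTdisj : T.Pairwise fun p q => Disjoint p.support q.support
  hTinit : initVerts T = X \ {x}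
  oracle : ∀ S : Set (Dipath E), IsXYSystem E (X \ {x}) (Y \ {y}) S →
    initVerts S = X \ {x} → termVerts S = Y \ {y}

namespace Setup

variable {V : Type u} (C : Setup V)

/-- trivial path -/
def triv (z : V) : Dipath C.E := ⟨z, [], List.Chain.nil, by simp⟩

theorem hqpx : C.q ≠ C.px := by
  intro h
  exact C.hxxne (by rw [← C.hqs, h, C.hpxs])

theorem hxxX : C.xx ∈ C.X := C.hqs ▸ (C.hPpath C.q C.hqP).1

/-- the vertex set from which paths still need to be rerouted -/
def SM : Set V := C.X \ {C.x, C.xx}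

theorem SM_sub : C.SM ⊆ C.X \ {C.x} := fun z hz =>
  ⟨hz.1, fun h => hz.2 (Or.inl h)⟩

/-- the残 system: P without the paths from x and xx -/
def M : Set (Dipath C.E) := C.P \ {C.px, C.q}

theorem M_sub : C.M ⊆ C.P := Set.diff_subset

theorem q_not_M : C.q ∉ C.M := fun h => h.2 (Or.inr rfl)

theorem px_not_M : C.px ∉ C.M := fun h => h.2 (Or.inl rfl)

theorem exists_M (z : V) (hz : z ∈ C.SM) : ∃ p ∈ C.M, p.start = z := by
  have hzX : z ∈ C.X := hz.1
  obtain ⟨p, hp, hps⟩ := mem_initVerts.mp (C.hPinit ▸ hzX : z ∈ initVerts C.P)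
  refine ⟨p, ⟨hp, ?_⟩, hps⟩
  rintro (rfl | rfl)
  · exact hz.2 (Or.inl (by rw [← hps, C.hpxs]))
  · exact hz.2 (Or.inr (show z = C.xx by rw [← hps, C.hqs]))

open Classical in
noncomputable def O (z : V) : Dipath C.E :=
  if h : ∃ p ∈ C.M, p.start = z then h.choose else C.triv z

theorem O_mem {z : V} (hz : z ∈ C.SM) : C.O z ∈ C.M := by
  have h := C.exists_M z hz
  rw [O, dif_pos h]
  exact h.choose_spec.1

theorem O_start {z : V} (hz : z ∈ C.SM) : (C.O z).start = z := by
  have h := C.exists_M z hz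
  rw [O, dif_pos h]
  exact h.choose_spec.2

theorem O_memP {z : V} (hz : z ∈ C.SM) : C.O z ∈ C.P := C.M_sub (C.O_mem hz)

theorem exists_T (d : V) (hd : d ∈ C.X \ {C.x}) : ∃ p ∈ C.T, p.start = d :=
  mem_initVerts.mp (C.hTinit ▸ hd : d ∈ initVerts C.T)

open Classical in
noncomputable def rT (d : V) : Dipath C.E :=
  if h : ∃ p ∈ C.T, p.start = d then h.choose else C.triv d

theorem rT_mem {d : V} (hd : d ∈ C.X \ {C.x}) : C.rT d ∈ C.T := by
  have h := C.exists_T d hd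
  rw [rT, dif_pos h]
  exact h.choose_spec.1

theorem rT_start {d : V} (hd : d ∈ C.X \ {C.x}) : (C.rT d).start = d := by
  have h := C.exists_T d hd
  rw [rT, dif_pos h]
  exact h.choose_spec.2

/-- distinct O-paths are vertex-disjoint -/
theorem O_disj {z₁ z₂ : V} (h₁ : z₁ ∈ C.SM) (h₂ : z₂ ∈ C.SM) (hne : z₁ ≠ z₂)
    {a : V} (ha : a ∈ (C.O z₁).verts) : a ∉ (C.O z₂).verts := by
  have hOne : C.O z₁ ≠ C.O z₂ := fun h => hne (by rw [← C.O_start h₁, h, C.O_start h₂])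
  exact pairwise_not_mem C.hPdisj (C.O_memP h₁) (C.O_memP h₂) hOne ha

/-- distinct T-paths are vertex-disjoint; in particular a common vertex forces equality
of the start vertices -/
theorem rT_disj {d₁ d₂ : V} (h₁ : d₁ ∈ C.X \ {C.x}) (h₂ : d₂ ∈ C.X \ {C.x})
    {a : V} (ha₁ : a ∈ (C.rT d₁).verts) (ha₂ : a ∈ (C.rT d₂).verts) : d₁ = d₂ := by
  by_contra hne
  have hOne : C.rT d₁ ≠ C.rT d₂ := fun h => hne (by rw [← C.rT_start h₁, h, C.rT_start h₂])
  exact pairwise_not_mem C.hTdisj (C.rT_mem h₁) (C.rT_mem h₂) hOne ha₁ ha₂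

/-- a vertex of `X` lying on a T-path is its start -/
theorem X_on_rT {d a : V} (hd : d ∈ C.X \ {C.x}) (haX : a ∈ C.X)
    (ha : a ∈ (C.rT d).verts) : a = d := by
  rw [← C.rT_start hd]
  exact mem_X_eq_start C.hX _ haX ha

theorem O_last_Y {z : V} (hz : z ∈ C.SM) : (C.O z).last ∈ C.Y :=
  ((C.hPpath _ (C.O_memP hz)).2).1

theorem O_last_ne_y {z : V} (hz : z ∈ C.SM) : (C.O z).last ≠ C.y := by
  intro h
  have hyq : C.y ∈ C.q.verts := C.hql ▸ last_mem_verts C.q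
  have hOq : C.O z ≠ C.q := fun hh => C.q_not_M (hh ▸ C.O_mem hz)
  exact pairwise_not_mem C.hPdisj (C.O_memP hz) C.hqP hOq (h ▸ last_mem_verts (C.O z)) hyq

theorem O_last_ne_ystar {z : V} (hz : z ∈ C.SM) : (C.O z).last ≠ C.ystar := by
  intro h
  exact C.hystar (mem_termVerts.mpr ⟨C.O z, C.O_memP hz, h⟩)

def y1 : V := C.px.last

theorem y1_termP : C.y1 ∈ termVerts C.P := mem_termVerts.mpr ⟨C.px, C.hpxP, rfl⟩

theorem y1_Y : C.y1 ∈ C.Y := ((C.hPpath _ C.hpxP).2).1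

theorem y1_ne_y : C.y1 ≠ C.y := by
  intro h
  have hyq : C.y ∈ C.q.verts := C.hql ▸ last_mem_verts C.q
  exact pairwise_not_mem C.hPdisj C.hpxP C.hqP (Ne.symm C.hqpx)
    (h ▸ last_mem_verts C.px) hyq

theorem O_last_ne_y1 {z : V} (hz : z ∈ C.SM) : (C.O z).last ≠ C.y1 := by
  intro h
  have hOpx : C.O z ≠ C.px := fun hh => C.px_not_M (hh ▸ C.O_mem hz)
  refine pairwise_not_mem C.hPdisj (C.O_memP hz) C.hpxP hOpx ?_ (last_mem_verts C.px)
  rw [show C.px.last = (C.O z).last from h.symm]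
  exact last_mem_verts _

theorem ystar_ne_y : C.ystar ≠ C.y := by
  intro h
  exact C.hystar (h ▸ mem_termVerts.mpr ⟨C.q, C.hqP, C.hql⟩)

end Setup
end StmtAux
namespace StmtAux

open List

variable {V : Type u}

open Classical in
noncomputable def takeUntil (v : V) : List V → List V
  | [] => []
  | a :: t => if a = v then [] else a :: takeUntil v t

theorem takeUntil_cons_ne {v a : V} (t : List V) (h : a ≠ v) :
    takeUntil v (a :: t) = a :: takeUntil v t := by
  rw [takeUntil, if_neg h]

theorem takeUntil_cons_eq {v : V} (t : List V) :
    takeUntil v (v :: t) = [] := by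
  rw [takeUntil, if_pos rfl]

theorem takeUntil_split {v : V} {l : List V} (hv : v ∈ l) :
    ∃ l₂, l = takeUntil v l ++ v :: l₂ := by
  induction l with
  | nil => exact absurd hv List.not_mem_nil
  | cons a t ih =>
    by_cases hav : a = v
    · subst hav
      exact ⟨t, by rw [takeUntil_cons_eq]; rfl⟩
    · obtain ⟨l₂, hl₂⟩ := ih (by
        rcases List.mem_cons.mp hv with h | h
        · exact absurd h.symm hav
        · exact h)
      exact ⟨l₂, by rw [takeUntil_cons_ne t hav, List.cons_append, ← hl₂]⟩

theorem takeUntil_subset {v : V} {l : List V} : ∀ a ∈ takeUntil v l, a ∈ l := by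
  induction l with
  | nil => intro a ha; rw [takeUntil] at ha; exact absurd ha List.not_mem_nil
  | cons b t ih =>
    intro a ha
    by_cases hbv : b = v
    · subst hbv; rw [takeUntil_cons_eq] at ha; exact absurd ha List.not_mem_nil
    · rw [takeUntil_cons_ne t hbv] at ha
      rcases List.mem_cons.mp ha with rfl | h
      · exact List.mem_cons_self
      · exact List.mem_cons_of_mem _ (ih a h)

theorem takeUntil_ne {v : V} {l : List V} : ∀ a ∈ takeUntil v l, a ≠ v := by
  induction l with
  | nil => intro a ha; rw [takeUntil] at ha; exact absurd ha List.not_mem_nil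
  | cons b t ih =>
    intro a ha
    by_cases hbv : b = v
    · subst hbv; rw [takeUntil_cons_eq] at ha; exact absurd ha List.not_mem_nil
    · rw [takeUntil_cons_ne t hbv] at ha
      rcases List.mem_cons.mp ha with rfl | h
      · exact hbv
      · exact ih a h

theorem takeUntil_eq' {l₁ l₂ : List V} {v : V} (hv : v ∉ l₁) :
    takeUntil v (l₁ ++ v :: l₂) = l₁ := by
  induction l₁ with
  | nil => rw [List.nil_append, takeUntil_cons_eq]
  | cons b t ih =>
    have hb : b ≠ v := fun h => hv (h ▸ (List.mem_cons_self : b ∈ b :: t))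
    have ht : v ∉ t := fun h => hv (List.mem_cons_of_mem _ h)
    rw [List.cons_append, takeUntil_cons_ne _ hb, ih ht]

def posOf : Option (V × ℕ) → ℕ
  | none => 0
  | some (_, k) => k

@[simp] theorem posOf_none : posOf (none : Option (V × ℕ)) = 0 := rfl
@[simp] theorem posOf_some (d : V) (k : ℕ) : posOf (some (d, k)) = k := rfl

def owner (c : V → Option (V × ℕ)) (z : V) : V :=
  match c z with
  | none => z
  | some (d, _) => d

theorem owner_none {c : V → Option (V × ℕ)} {z : V} (h : c z = none) :
    owner c z = z := by simp only [owner, h]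

theorem owner_some {c : V → Option (V × ℕ)} {z d : V} {k : ℕ} (h : c z = some (d, k)) :
    owner c z = d := by simp only [owner, h]

namespace Setup

variable {V : Type u} (C : Setup V)

noncomputable def cutV (z : V) (k : ℕ) : V := (C.O z).verts.getD k z

noncomputable def hybrid (c : V → Option (V × ℕ)) (z : V) : List V :=
  match c z with
  | none => (C.O z).verts
  | some (d, k) => takeUntil (C.cutV z k) (C.rT d).verts ++ (C.O z).verts.drop k

def CutOK (z d : V) (k : ℕ) : Prop :=
  d ∈ C.X \ {C.x} ∧ 1 ≤ k ∧ k < (C.O z).verts.length ∧ C.cutV z k ∈ (C.rT d).verts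

def Served (c : V → Option (V × ℕ)) (w : V) : Prop :=
  (w ∈ C.SM ∧ c w = none) ∨ ∃ z ∈ C.SM, ∃ k, c z = some (w, k)

def Defi (c : V → Option (V × ℕ)) (w : V) : Prop := w ∈ C.X \ {C.x} ∧ ¬ C.Served c w

def Valid (c : V → Option (V × ℕ)) : Prop :=
  (∀ z, c z ≠ none → z ∈ C.SM) ∧
  (∀ z d k, c z = some (d, k) → C.CutOK z d k) ∧
  (∀ z₁ ∈ C.SM, ∀ z₂ ∈ C.SM, z₁ ≠ z₂ → ∀ a ∈ C.hybrid c z₁, a ∉ C.hybrid c z₂) ∧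
  (∀ z ∈ C.SM, List.Chain' (fun a b => (a, b) ∈ C.E) (C.hybrid c z) ∧ (C.hybrid c z).Nodup) ∧
  (∀ w w', C.Defi c w → C.Defi c w' → w = w')

variable {c : V → Option (V × ℕ)} {z d : V} {k : ℕ}

theorem hybrid_none (h : c z = none) : C.hybrid c z = (C.O z).verts := by
  simp only [hybrid, h]

theorem hybrid_some (h : c z = some (d, k)) :
    C.hybrid c z = takeUntil (C.cutV z k) (C.rT d).verts ++ (C.O z).verts.drop k := by
  simp only [hybrid, h]

theorem cutV_eq (hk : k < (C.O z).verts.length) : C.cutV z k = (C.O z).verts[k] :=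
  List.getD_eq_getElem _ _ hk

theorem cutV_mem_verts (hk : k < (C.O z).verts.length) : C.cutV z k ∈ (C.O z).verts := by
  rw [C.cutV_eq hk]; exact List.getElem_mem _

theorem cutV_mem_rest (hk1 : 1 ≤ k) (hk : k < (C.O z).verts.length) :
    C.cutV z k ∈ (C.O z).rest := by
  rw [C.cutV_eq hk]
  obtain ⟨k', rfl⟩ : ∃ k', k = k' + 1 := ⟨k - 1, by omega⟩
  have : (C.O z).verts[k' + 1] = (C.O z).rest[k']'(by
      have := hk; simp only [Dipath.verts, List.length_cons] at this ⊢; omega) := by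
    simp [Dipath.verts]
  rw [this]
  exact List.getElem_mem _

theorem cutV_not_X (hk1 : 1 ≤ k) (hk : k < (C.O z).verts.length) : C.cutV z k ∉ C.X := by
  obtain ⟨u, hu⟩ := rest_in_edge (C.O z) (C.cutV_mem_rest hk1 hk)
  exact C.hX _ hu

/-- the start vertex never reappears in a dropped part -/
theorem start_not_mem_drop (p : Dipath C.E) (hk1 : 1 ≤ k) :
    p.start ∉ p.verts.drop k := by
  obtain ⟨k', rfl⟩ : ∃ k', k = k' + 1 := ⟨k - 1, by omega⟩
  intro h
  have h' : p.start ∈ p.rest.drop k' := by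
    simpa [Dipath.verts, List.drop_succ_cons] using h
  exact (List.nodup_cons.mp p.nodup).1 (List.mem_of_mem_drop h')

theorem drop_ne_nil {l : List V} (hk : k < l.length) : l.drop k ≠ [] := by
  intro h
  have : (l.drop k).length = l.length - k := List.length_drop
  rw [h] at this
  simp at this
  omega

theorem hybrid_ne_nil (hval : C.Valid c) (hz : z ∈ C.SM) : C.hybrid c z ≠ [] := by
  cases hcz : c z with
  | none => rw [C.hybrid_none hcz]; exact verts_ne_nil _
  | some dk =>
    obtain ⟨d, k⟩ := dk
    obtain ⟨hd, hk1, hk, hcut⟩ := hval.2.1 z d k hcz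
    rw [C.hybrid_some hcz]
    intro h
    rcases List.append_eq_nil_iff.mp h with ⟨-, h2⟩
    exact drop_ne_nil hk h2

theorem rT_verts_cons (hd : d ∈ C.X \ {C.x}) :
    (C.rT d).verts = d :: (C.rT d).rest := by
  rw [Dipath.verts, C.rT_start hd]

theorem hybrid_head? (hval : C.Valid c) (hz : z ∈ C.SM) :
    (C.hybrid c z).head? = some (owner c z) := by
  cases hcz : c z with
  | none =>
    rw [C.hybrid_none hcz, owner_none hcz, head?_verts, C.O_start hz]
  | some dk =>
    obtain ⟨d, k⟩ := dk
    obtain ⟨hd, hk1, hk, hcut⟩ := hval.2.1 z d k hcz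
    rw [C.hybrid_some hcz, owner_some hcz]
    have hne : d ≠ C.cutV z k := by
      intro h
      exact C.cutV_not_X hk1 hk (h ▸ hd.1)
    rw [C.rT_verts_cons hd, takeUntil_cons_ne _ hne]
    rfl

theorem getLast?_verts (p : Dipath C.E) : p.verts.getLast? = some p.last := by
  rw [last_eq_getLast, List.getLast?_eq_getLast (verts_ne_nil p)]

theorem getLast?_append_right {l₁ l₂ : List V} (h : l₂ ≠ []) :
    (l₁ ++ l₂).getLast? = l₂.getLast? := by
  induction l₁ with
  | nil => rfl
  | cons a t ih =>
    rw [List.cons_append, List.getLast?_cons, ih]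
    cases l₂ with
    | nil => exact absurd rfl h
    | cons b t' => simp [List.getLast?_eq_getLast]

theorem getLast?_drop_of_ne_nil {l : List V} {k : ℕ} (h : l.drop k ≠ []) :
    (l.drop k).getLast? = l.getLast? := by
  conv_rhs => rw [← List.take_append_drop k l]
  rw [getLast?_append_right h]

theorem hybrid_getLast? (hval : C.Valid c) (hz : z ∈ C.SM) :
    (C.hybrid c z).getLast? = some ((C.O z).last) := by
  cases hcz : c z with
  | none => rw [C.hybrid_none hcz, C.getLast?_verts]
  | some dk =>
    obtain ⟨d, k⟩ := dk
    obtain ⟨hd, hk1, hk, hcut⟩ := hval.2.1 z d k hcz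
    rw [C.hybrid_some hcz, getLast?_append_right (drop_ne_nil hk),
      getLast?_drop_of_ne_nil (drop_ne_nil hk), C.getLast?_verts]

theorem mem_hybrid_cases (hz : z ∈ C.SM) {a : V} (ha : a ∈ C.hybrid c z) :
    a ∈ (C.O z).verts.drop (posOf (c z)) ∨
      ∃ d k, c z = some (d, k) ∧ a ∈ (C.rT d).verts ∧ a ≠ C.cutV z k := by
  cases hcz : c z with
  | none =>
    rw [C.hybrid_none hcz] at ha
    left; simp only [posOf_none]; simpa using ha
  | some dk =>
    obtain ⟨d, k⟩ := dk
    rw [C.hybrid_some hcz] at ha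
    rcases List.mem_append.mp ha with h | h
    · exact Or.inr ⟨d, k, rfl, takeUntil_subset a h, takeUntil_ne a h⟩
    · left; simp only [posOf_some]; exact h

/-- a deficient vertex appears on no hybrid path -/
theorem defi_not_mem_hybrid (hval : C.Valid c) (hz : z ∈ C.SM) {w : V}
    (hw : C.Defi c w) : w ∉ C.hybrid c z := by
  intro hmem
  rcases C.mem_hybrid_cases hz hmem with h | ⟨d, k, hcz, hrt, hne⟩
  · have hwO : w ∈ (C.O z).verts := List.mem_of_mem_drop h
    have hwz : w = z := by
      rw [← C.O_start hz]
      exact mem_X_eq_start C.hX _ hw.1.1 hwO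
    subst hwz
    cases hcz : c w with
    | none => exact hw.2 (Or.inl ⟨hz, hcz⟩)
    | some dk =>
      obtain ⟨d, k⟩ := dk
      obtain ⟨hd, hk1, hk, hcut⟩ := hval.2.1 w d k hcz
      rw [hcz] at h
      have := C.start_not_mem_drop (C.O w) hk1
      rw [C.O_start hz] at this
      exact this (by simpa using h)
  · obtain ⟨hd, hk1, hk, hcut⟩ := hval.2.1 z d k hcz
    have hwd : w = d := C.X_on_rT hd hw.1.1 hrt
    exact hw.2 (Or.inr ⟨z, hz, k, by rw [hcz, hwd]⟩)

open Classical in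
noncomputable def pathAt (c : V → Option (V × ℕ)) (z : V) : Dipath C.E :=
  if h : C.hybrid c z ≠ [] ∧ List.Chain' (fun a b => (a, b) ∈ C.E) (C.hybrid c z) ∧
      (C.hybrid c z).Nodup
  then mkPath _ h.1 h.2.1 h.2.2
  else C.triv z

theorem pathAt_verts (hval : C.Valid c) (hz : z ∈ C.SM) :
    (C.pathAt c z).verts = C.hybrid c z := by
  have h : C.hybrid c z ≠ [] ∧ List.Chain' (fun a b => (a, b) ∈ C.E) (C.hybrid c z) ∧
      (C.hybrid c z).Nodup :=
    ⟨C.hybrid_ne_nil hval hz, (hval.2.2.2.1 z hz).1, (hval.2.2.2.1 z hz).2⟩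
  rw [pathAt, dif_pos h]
  exact mkPath_verts _ _ _ _

theorem pathAt_start (hval : C.Valid c) (hz : z ∈ C.SM) :
    (C.pathAt c z).start = owner c z := by
  have h1 := head?_verts (C.pathAt c z)
  rw [C.pathAt_verts hval hz, C.hybrid_head? hval hz] at h1
  exact (Option.some.inj h1).symm

theorem pathAt_last (hval : C.Valid c) (hz : z ∈ C.SM) :
    (C.pathAt c z).last = (C.O z).last := by
  have h1 := C.getLast?_verts (C.pathAt c z)
  rw [C.pathAt_verts hval hz, C.hybrid_getLast? hval hz] at h1
  exact (Option.some.inj h1.symm)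

def Sys (c : V → Option (V × ℕ)) : Set (Dipath C.E) := (fun z => C.pathAt c z) '' C.SM

theorem owner_mem (hval : C.Valid c) (hz : z ∈ C.SM) : owner c z ∈ C.X \ {C.x} := by
  cases hcz : c z with
  | none => rw [owner_none hcz]; exact C.SM_sub hz
  | some dk =>
    obtain ⟨d, k⟩ := dk
    rw [owner_some hcz]
    exact (hval.2.1 z d k hcz).1

theorem Sys_path (hval : C.Valid c) :
    ∀ p ∈ C.Sys c, IsXYPath C.E (C.X \ {C.x}) (C.Y \ {C.y}) p := by
  rintro p ⟨z, hz, rfl⟩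
  refine isXYPath_of C.hX C.hY Set.diff_subset Set.diff_subset ?_ ?_
  · rw [C.pathAt_start hval hz]; exact C.owner_mem hval hz
  · rw [C.pathAt_last hval hz]
    exact ⟨C.O_last_Y hz, C.O_last_ne_y hz⟩

theorem Sys_disj (hval : C.Valid c) :
    (C.Sys c).Pairwise fun p q => Disjoint p.support q.support := by
  rintro p ⟨z₁, hz₁, rfl⟩ p' ⟨z₂, hz₂, rfl⟩ hne
  have hzne : z₁ ≠ z₂ := fun h => hne (by rw [h])
  rw [Set.disjoint_left]
  intro a ha ha'
  rw [mem_support_iff, C.pathAt_verts hval hz₁] at ha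
  rw [mem_support_iff, C.pathAt_verts hval hz₂] at ha'
  exact hval.2.2.1 z₁ hz₁ z₂ hz₂ hzne a ha ha'

theorem served_iff (hz : True) {w : V} :
    C.Served c w ↔ ∃ z ∈ C.SM, owner c z = w := by
  constructor
  · rintro (⟨hw, hcw⟩ | ⟨z, hz', k, hcz⟩)
    · exact ⟨w, hw, owner_none hcw⟩
    · exact ⟨z, hz', owner_some hcz⟩
  · rintro ⟨z, hz', how⟩
    cases hcz : c z with
    | none =>
      rw [owner_none hcz] at how
      subst how
      exact Or.inl ⟨hz', hcz⟩
    | some dk =>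
      obtain ⟨d, k⟩ := dk
      rw [owner_some hcz] at how
      subst how
      exact Or.inr ⟨z, hz', k, hcz⟩

theorem Sys_init (hval : C.Valid c) : initVerts (C.Sys c) = {w | C.Served c w} := by
  ext w
  rw [mem_initVerts]
  constructor
  · rintro ⟨p, ⟨z, hz, rfl⟩, hs⟩
    rw [C.pathAt_start hval hz] at hs
    exact (C.served_iff trivial).mpr ⟨z, hz, hs⟩
  · intro hw
    obtain ⟨z, hz, how⟩ := (C.served_iff trivial).mp hw
    exact ⟨C.pathAt c z, ⟨z, hz, rfl⟩, by rw [C.pathAt_start hval hz]; exact how⟩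

theorem Sys_term (hval : C.Valid c) {b : V} (hb : b ∈ termVerts (C.Sys c)) :
    ∃ z ∈ C.SM, (C.O z).last = b := by
  obtain ⟨p, ⟨z, hz, rfl⟩, hl⟩ := mem_termVerts.mp hb
  exact ⟨z, hz, by rw [← C.pathAt_last hval hz]; exact hl⟩

end Setup
end StmtAux
namespace StmtAux

variable {V : Type u}

def stLe (c c' : V → Option (V × ℕ)) : Prop :=
  ∀ z, c z = c' z ∨ posOf (c z) < posOf (c' z)

theorem stLe_refl (c : V → Option (V × ℕ)) : stLe c c := fun z => Or.inl rfl

theorem stLe_trans {c₁ c₂ c₃ : V → Option (V × ℕ)} (h₁ : stLe c₁ c₂) (h₂ : stLe c₂ c₃) :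
    stLe c₁ c₃ := by
  intro z
  rcases h₁ z with h | h <;> rcases h₂ z with h' | h'
  · exact Or.inl (h.trans h')
  · exact Or.inr (h ▸ h')
  · exact Or.inr (h' ▸ h)
  · exact Or.inr (h.trans h')

namespace Setup

variable {V : Type u} (C : Setup V) {c : V → Option (V × ℕ)} {z d : V} {k : ℕ}

theorem hybrid_congr {c c' : V → Option (V × ℕ)} {z : V} (h : c z = c' z) :
    C.hybrid c z = C.hybrid c' z := by
  simp only [hybrid, h]

theorem valid_base : C.Valid (fun _ => none) := by
  refine ⟨fun z h => absurd rfl h, fun z d k h => by simp at h, ?_, ?_, ?_⟩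
  · intro z₁ h₁ z₂ h₂ hne a ha ha'
    rw [C.hybrid_none rfl] at ha ha'
    exact C.O_disj h₁ h₂ hne ha ha'
  · intro z hz
    rw [C.hybrid_none rfl]
    exact ⟨chain'_verts _, (C.O z).nodup⟩
  · intro w w' hw hw'
    have huni : ∀ u, C.Defi (fun _ => none) u → u = C.xx := by
      intro u hu
      by_contra hne
      have huSM : u ∈ C.SM := ⟨hu.1.1, by
        rintro (h | h)
        · exact hu.1.2 h
        · exact hne h⟩
      exact hu.2 (Or.inl ⟨huSM, rfl⟩)
    rw [huni w hw, huni w' hw']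

theorem no_defi_false (hval : C.Valid c) (hnd : ∀ w, ¬ C.Defi c w) : False := by
  have hsys : IsXYSystem C.E (C.X \ {C.x}) (C.Y \ {C.y}) (C.Sys c) :=
    ⟨C.Sys_path hval, C.Sys_disj hval⟩
  have hinit : initVerts (C.Sys c) = C.X \ {C.x} := by
    rw [C.Sys_init hval]
    ext w
    simp only [Set.mem_setOf_eq]
    constructor
    · intro hw
      obtain ⟨z, hz, how⟩ := (C.served_iff trivial).mp hw
      rw [← how]
      exact C.owner_mem hval hz
    · intro hw
      by_contra hns
      exact hnd w ⟨hw, hns⟩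
  have hterm := C.oracle _ hsys hinit
  have hst : C.ystar ∈ termVerts (C.Sys c) := by
    rw [hterm]; exact ⟨C.hystarY, C.ystar_ne_y⟩
  obtain ⟨z, hz, hl⟩ := C.Sys_term hval hst
  exact C.O_last_ne_ystar hz hl

theorem one_defi_nohit_false (hval : C.Valid c) {dd : V} (hdd : C.Defi c dd)
    (huni : ∀ w, C.Defi c w → w = dd)
    (hnohit : ∀ a ∈ (C.rT dd).verts, ∀ z ∈ C.SM, a ∉ C.hybrid c z) : False := by
  have hddX : dd ∈ C.X \ {C.x} := hdd.1
  set S : Set (Dipath C.E) := C.Sys c ∪ {C.rT dd} with hS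
  have hrdisj : ∀ p ∈ C.Sys c, Disjoint p.support (C.rT dd).support := by
    rintro p ⟨z, hz, rfl⟩
    rw [Set.disjoint_left]
    intro a ha ha'
    rw [mem_support_iff, C.pathAt_verts hval hz] at ha
    rw [mem_support_iff] at ha'
    exact hnohit a ha' z hz ha
  have hdisj : S.Pairwise fun p q => Disjoint p.support q.support := by
    intro p hp p' hp' hne
    rcases hp with hp | hp <;> rcases hp' with hp' | hp'
    · exact C.Sys_disj hval hp hp' hne
    · rw [Set.mem_singleton_iff] at hp'; subst hp'
      exact hrdisj p hp
    · rw [Set.mem_singleton_iff] at hp; subst hp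
      exact (hrdisj p' hp').symm
    · rw [Set.mem_singleton_iff] at hp hp'
      exact absurd (hp.trans hp'.symm) hne
  have hsys : IsXYSystem C.E (C.X \ {C.x}) (C.Y \ {C.y}) S := by
    refine ⟨?_, hdisj⟩
    rintro p (hp | hp)
    · exact C.Sys_path hval p hp
    · rw [Set.mem_singleton_iff] at hp; subst hp
      exact C.hTpath _ (C.rT_mem hddX)
  have hinit : initVerts S = C.X \ {C.x} := by
    rw [hS, initVerts, Set.image_union, ← initVerts, ← initVerts, C.Sys_init hval]
    ext w
    simp only [Set.mem_union, Set.mem_setOf_eq]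
    constructor
    · rintro (hw | hw)
      · obtain ⟨z, hz, how⟩ := (C.served_iff trivial).mp hw
        rw [← how]
        exact C.owner_mem hval hz
      · obtain ⟨p, hp, hps⟩ := mem_initVerts.mp hw
        rw [Set.mem_singleton_iff] at hp; subst hp
        rw [← hps, C.rT_start hddX]
        exact hddX
    · intro hw
      by_cases hserved : C.Served c w
      · exact Or.inl hserved
      · have : w = dd := huni w ⟨hw, hserved⟩
        subst this
        exact Or.inr (mem_initVerts.mpr ⟨C.rT w, Set.mem_singleton _, C.rT_start hddX⟩)
  have hterm := C.oracle _ hsys hinit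
  have hmem : ∀ b : V, b ∈ C.Y \ {C.y} → b ∈ termVerts (C.Sys c) ∨ b = (C.rT dd).last := by
    intro b hb
    rw [← hterm, hS, termVerts, Set.image_union, ← termVerts, ← termVerts] at hb
    rcases hb with hb | hb
    · exact Or.inl hb
    · obtain ⟨p, hp, hpl⟩ := mem_termVerts.mp hb
      rw [Set.mem_singleton_iff] at hp; subst hp
      exact Or.inr hpl.symm
  have hy1 : C.y1 = (C.rT dd).last := by
    rcases hmem C.y1 ⟨C.y1_Y, C.y1_ne_y⟩ with h | h
    · obtain ⟨z, hz, hl⟩ := C.Sys_term hval h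
      exact absurd hl (C.O_last_ne_y1 hz)
    · exact h
  have hys : C.ystar = (C.rT dd).last := by
    rcases hmem C.ystar ⟨C.hystarY, C.ystar_ne_y⟩ with h | h
    · obtain ⟨z, hz, hl⟩ := C.Sys_term hval h
      exact absurd hl (C.O_last_ne_ystar hz)
    · exact h
  apply C.hystar
  rw [hys, ← hy1]
  exact C.y1_termP

end Setup
end StmtAux
namespace StmtAux
namespace Setup

open List

variable {V : Type u} (C : Setup V) {c : V → Option (V × ℕ)}

theorem step (hval : C.Valid c) {dd : V} (hdd : C.Defi c dd)
    (huni : ∀ w, C.Defi c w → w = dd)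
    (hhit : ∃ a ∈ (C.rT dd).verts, a ∈ {a | ∃ z ∈ C.SM, a ∈ C.hybrid c z}) :
    ∃ c', C.Valid c' ∧ stLe c c' ∧ ¬ stLe c' c := by
  classical
  have hddX : dd ∈ C.X \ {C.x} := hdd.1
  obtain ⟨l₁, v, l₂, hsplit, hvU, hl₁⟩ := split_first hhit
  obtain ⟨zπ, hzπ, hvz⟩ := hvU
  have hvrt : v ∈ (C.rT dd).verts := by
    rw [hsplit]; exact List.mem_append_right _ List.mem_cons_self
  have hvdd : v ≠ dd := fun h => C.defi_not_mem_hybrid hval hzπ hdd (h ▸ hvz)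
  rcases C.mem_hybrid_cases hzπ hvz with hdrop | ⟨d', k', hcz', hrt', hnecut⟩
  swap
  · exfalso
    have hd' := (hval.2.1 zπ d' k' hcz').1
    have hdd' : dd = d' := C.rT_disj hddX hd' hvrt hrt'
    exact hdd.2 (Or.inr ⟨zπ, hzπ, k', by rw [hcz', ← hdd']⟩)
  obtain ⟨j, hj, hvj⟩ := List.mem_iff_getElem.mp hdrop
  have hkv : posOf (c zπ) + j < (C.O zπ).verts.length := by
    have := hj; simp only [List.length_drop] at this; omega
  have hvkv : (C.O zπ).verts[posOf (c zπ) + j]'hkv = v := by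
    rw [List.getElem_drop] at hvj; exact hvj
  have hvg : C.cutV zπ (posOf (c zπ) + j) = v := by
    rw [C.cutV_eq hkv]; exact hvkv
  have hj1 : 1 ≤ j := by
    rcases Nat.eq_zero_or_pos j with hj0 | h
    · exfalso
      subst hj0
      cases hcz : c zπ with
      | none =>
        rw [hcz] at hvg
        simp only [posOf_none, Nat.add_zero] at hvg
        have hlen0 : 0 < (C.O zπ).verts.length := by
          simp [Dipath.verts]
        rw [C.cutV_eq hlen0] at hvg
        have hv0 : v = (C.O zπ).start := by
          rw [← hvg]; simp [Dipath.verts]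
        have hvX : v ∈ C.X := by rw [hv0, C.O_start hzπ]; exact hzπ.1
        exact hvdd (C.X_on_rT hddX hvX hvrt)
      | some dk =>
        obtain ⟨d₀, k₀⟩ := dk
        obtain ⟨hd₀, hk₀1, hk₀, hcut₀⟩ := hval.2.1 zπ d₀ k₀ hcz
        rw [hcz] at hvg
        simp only [posOf_some, Nat.add_zero] at hvg
        have hdd₀ : dd = d₀ := C.rT_disj hddX hd₀ hvrt (hvg ▸ hcut₀)
        exact hdd.2 (Or.inr ⟨zπ, hzπ, k₀, by rw [hcz, ← hdd₀]⟩)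
    · omega
  have hkv1 : 1 ≤ posOf (c zπ) + j := by omega
  have hkvgt : posOf (c zπ) < posOf (c zπ) + j := by omega
  set kv := posOf (c zπ) + j with hkvdef
  set c' := Function.update c zπ (some (dd, kv)) with hc'def
  have hc'z : c' zπ = some (dd, kv) := Function.update_self _ _ _
  have hc'ne : ∀ z, z ≠ zπ → c' z = c z := fun z hz => Function.update_of_ne hz _ _
  have hcutv : C.cutV zπ kv = v := by rw [C.cutV_eq hkv]; exact hvkv
  have hvl₁ : v ∉ l₁ := fun h => hl₁ v h ⟨zπ, hzπ, hvz⟩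
  have hhyb' : C.hybrid c' zπ = l₁ ++ (C.O zπ).verts.drop kv := by
    rw [C.hybrid_some hc'z, hcutv]
    congr 1
    rw [hsplit]
    exact takeUntil_eq' hvl₁
  have hhybeq : ∀ z, z ≠ zπ → C.hybrid c' z = C.hybrid c z :=
    fun z hz => (C.hybrid_congr (hc'ne z hz))
  have hdropsub : ∀ a ∈ (C.O zπ).verts.drop kv, a ∈ C.hybrid c zπ := by
    intro a ha
    cases hcz : c zπ with
    | none =>
      rw [C.hybrid_none hcz]
      exact List.mem_of_mem_drop ha
    | some dk =>
      obtain ⟨d₀, k₀⟩ := dk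
      rw [C.hybrid_some hcz]
      apply List.mem_append_right
      have hdj : ((C.O zπ).verts.drop k₀).drop j = (C.O zπ).verts.drop kv := by
        rw [List.drop_drop, hkvdef, hcz]
        simp only [posOf_some]
      rw [← hdj] at ha
      exact List.mem_of_mem_drop ha
  refine ⟨c', ⟨?_, ?_, ?_, ?_, ?_⟩, ?_, ?_⟩
  · intro z hz
    by_cases h : z = zπ
    · subst h; exact hzπ
    · exact hval.1 z (by rwa [hc'ne z h] at hz)
  · intro z d k h
    by_cases hzz : z = zπ
    · subst hzz
      rw [hc'z] at h
      have h2 := Option.some.inj h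
      have hdd2 : dd = d := congrArg Prod.fst h2
      have hkv2 : kv = k := congrArg Prod.snd h2
      subst hdd2; subst hkv2
      exact ⟨hddX, hkv1, hkv, by rw [hcutv]; exact hvrt⟩
    · exact hval.2.1 z d k (by rwa [hc'ne z hzz] at h)
  · intro z₁ h₁ z₂ h₂ hne a ha haa
    by_cases hz1 : z₁ = zπ <;> by_cases hz2 : z₂ = zπ
    · exact hne (hz1.trans hz2.symm)
    · subst hz1
      rw [hhyb'] at ha
      rw [hhybeq z₂ hz2] at haa
      rcases List.mem_append.mp ha with h | h
      · exact hl₁ a h ⟨z₂, h₂, haa⟩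
      · exact hval.2.2.1 z₁ hzπ z₂ h₂ hne a (hdropsub a h) haa
    · subst hz2
      rw [hhybeq z₁ hz1] at ha
      rw [hhyb'] at haa
      rcases List.mem_append.mp haa with h | h
      · exact hl₁ a h ⟨z₁, h₁, ha⟩
      · exact hval.2.2.1 z₂ hzπ z₁ h₁ (Ne.symm hne) a (hdropsub a h) ha
    · rw [hhybeq z₁ hz1] at ha
      rw [hhybeq z₂ hz2] at haa
      exact hval.2.2.1 z₁ h₁ z₂ h₂ hne a ha haa
  · intro z hz
    by_cases hzz : z = zπ
    · subst hzz
      rw [hhyb']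
      have hchainr := chain'_verts (C.rT dd)
      rw [hsplit] at hchainr
      obtain ⟨hch1, hch2, hch3⟩ := List.isChain_append.mp hchainr
      have hchdrop : List.Chain' (fun a b => (a, b) ∈ C.E) ((C.O z).verts.drop kv) := by
        have h0 := chain'_verts (C.O z)
        rw [← List.take_append_drop kv (C.O z).verts] at h0
        exact (List.isChain_append.mp h0).2.1
      have hdropcons : (C.O z).verts.drop kv = v :: (C.O z).verts.drop (kv + 1) := by
        rw [List.drop_eq_getElem_cons hkv, hvkv]
      constructor
      · refine List.isChain_append.mpr ⟨hch1, hchdrop, ?_⟩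
        intro b hb u hu
        rw [hdropcons] at hu
        simp only [List.head?_cons, Option.mem_def, Option.some.injEq] at hu
        subst hu
        exact hch3 b hb v (by simp)
      · rw [List.nodup_append]
        refine ⟨?_, ?_, ?_⟩
        · have hnd := (C.rT dd).nodup
          have : ((C.rT dd).verts).Nodup := hnd
          rw [hsplit] at this
          exact this.of_append_left
        · exact ((C.O z).nodup).sublist (List.drop_sublist _ _)
        · intro a ha b ha' hab
          subst hab
          exact hl₁ a ha ⟨z, hzπ, hdropsub a ha'⟩
    · rw [hhybeq z hzz]
      exact hval.2.2.2.1 z hz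
  · have hkey : ∀ w, C.Defi c' w → w = owner c zπ := by
      intro w hw
      have hwdd : w ≠ dd := by
        intro h; subst h
        exact hw.2 (Or.inr ⟨zπ, hzπ, kv, hc'z⟩)
      by_contra hwdisp
      apply hw.2
      have hserved : C.Served c w := by
        by_contra hns
        exact hwdd (huni w ⟨hw.1, hns⟩)
      rcases hserved with ⟨hwSM, hcw⟩ | ⟨z, hz, k, hcz⟩
      · by_cases hwz : w = zπ
        · subst hwz
          exact absurd (by rw [owner_none hcw] : w = owner c w) hwdisp
        · exact Or.inl ⟨hwSM, by rw [hc'ne w hwz]; exact hcw⟩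
      · by_cases hzz : z = zπ
        · subst hzz
          exact absurd (by rw [owner_some hcz] : w = owner c z) hwdisp
        · exact Or.inr ⟨z, hz, k, by rw [hc'ne z hzz]; exact hcz⟩
    intro w w' hw hw'
    rw [hkey w hw, hkey w' hw']
  · intro z
    by_cases hzz : z = zπ
    · subst hzz
      right
      rw [hc'z]
      simp only [posOf_some]
      exact hkvgt
    · exact Or.inl (hc'ne z hzz).symm
  · intro hle
    rcases hle zπ with h | h
    · have := congrArg posOf h
      rw [hc'z] at this
      simp only [posOf_some] at this
      omega
    · rw [hc'z] at h
      simp only [posOf_some] at h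
      omega

end Setup
end StmtAux
namespace StmtAux
namespace Setup

open List

theorem derive_false {V : Type u} (C : Setup V) : False := by
  classical
  -- Zorn's lemma on valid states
  have hbdd : ∀ CC : Set {c : V → Option (V × ℕ) // C.Valid c},
      IsChain (fun a b => stLe a.1 b.1) CC →
      ∃ ub : {c : V → Option (V × ℕ) // C.Valid c}, ∀ a ∈ CC, stLe a.1 ub.1 := by
    intro CC hCC
    by_cases hne : CC.Nonempty
    · -- pick, for each coordinate, a chain element attaining the maximal position
      have hpick : ∀ z : V, ∃ a : {c : V → Option (V × ℕ) // C.Valid c},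
          a ∈ CC ∧ ∀ b ∈ CC, posOf (b.1 z) ≤ posOf (a.1 z) := by
        intro z
        set Pz := {n | ∃ a ∈ CC, posOf (a.1 z) = n} with hPz
        have hPne : Pz.Nonempty := ⟨posOf (hne.choose.1 z), hne.choose, hne.choose_spec, rfl⟩
        have hPb : BddAbove Pz := by
          refine ⟨(C.O z).verts.length, ?_⟩
          rintro n ⟨a, ha, rfl⟩
          cases hcz : a.1 z with
          | none => simp [posOf]
          | some dk =>
            obtain ⟨d, k⟩ := dk
            have := (a.2.2.1 z d k hcz).2.2.1
            simp only [posOf_some]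
            omega
        have hmem := Nat.sSup_mem hPne hPb
        obtain ⟨a, ha, hpa⟩ := hmem
        exact ⟨a, ha, fun b hb => hpa ▸ le_csSup hPb ⟨b, hb, rfl⟩⟩
      choose az hazCC hazmax using hpick
      set csup : V → Option (V × ℕ) := fun z => (az z).1 z with hcsup
      have hstab : ∀ z, ∀ a ∈ CC, stLe (az z).1 a.1 → a.1 z = csup z := by
        intro z a ha hle
        rcases hle z with h | h
        · exact h.symm
        · exact absurd h (by have := hazmax z a ha; omega)
      have hub : ∀ a ∈ CC, stLe a.1 csup := by
        intro a ha z
        rcases eq_or_ne a (az z) with rfl | hne'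
        · exact Or.inl rfl
        · rcases hCC ha (hazCC z) hne' with h | h
          · rcases h z with h' | h'
            · exact Or.inl h'
            · exact Or.inr h'
          · exact Or.inl (hstab z a ha h)
      have hcommon : ∀ z₁ z₂ : V, ∃ a ∈ CC, a.1 z₁ = csup z₁ ∧ a.1 z₂ = csup z₂ := by
        intro z₁ z₂
        rcases eq_or_ne (az z₁) (az z₂) with h | hne'
        · exact ⟨az z₁, hazCC z₁, rfl, by rw [h]⟩
        · rcases hCC (hazCC z₁) (hazCC z₂) hne' with h | h
          · exact ⟨az z₂, hazCC z₂, hstab z₁ _ (hazCC z₂) h, rfl⟩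
          · exact ⟨az z₁, hazCC z₁, rfl, hstab z₂ _ (hazCC z₁) h⟩
      -- finite subsets of the chain admit upper bounds in the chain
      have hpair : ∀ u v : {c : V → Option (V × ℕ) // C.Valid c}, u ∈ CC → v ∈ CC →
          ∃ m ∈ CC, stLe u.1 m.1 ∧ stLe v.1 m.1 := by
        intro u v hu hv
        rcases eq_or_ne u v with rfl | hne'
        · exact ⟨u, hu, stLe_refl _, stLe_refl _⟩
        · rcases hCC hu hv hne' with h | h
          · exact ⟨v, hv, h, stLe_refl _⟩
          · exact ⟨u, hu, stLe_refl _, h⟩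
      have hfinub : ∀ S : Set {c : V → Option (V × ℕ) // C.Valid c}, S.Finite → S ⊆ CC →
          ∃ ub ∈ CC, ∀ s ∈ S, stLe s.1 ub.1 := by
        intro S hS
        refine Set.Finite.induction_on (motive := fun s _ => s ⊆ CC → ∃ ub ∈ CC, ∀ s' ∈ s, stLe s'.1 ub.1) S hS ?_ ?_
        · intro _
          exact ⟨hne.choose, hne.choose_spec, by simp⟩
        · intro a s hna hsf IH hsub
          obtain ⟨ub, hubCC, hubs⟩ := IH (fun x hx => hsub (Set.mem_insert_of_mem a hx))
          have haCC : a ∈ CC := hsub (Set.mem_insert a s)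
          obtain ⟨m, hmCC, hm1, hm2⟩ := hpair a ub haCC hubCC
          refine ⟨m, hmCC, ?_⟩
          rintro x (rfl | hx)
          · exact hm1
          · exact stLe_trans (hubs x hx) hm2
      -- validity of the sup
      have hvalsup : C.Valid csup := by
        refine ⟨?_, ?_, ?_, ?_, ?_⟩
        · intro z h
          exact ((az z).2).1 z h
        · intro z d k h
          exact ((az z).2).2.1 z d k h
        · intro z₁ h₁ z₂ h₂ hne' a ha ha'
          obtain ⟨b, hb, e₁, e₂⟩ := hcommon z₁ z₂
          rw [← C.hybrid_congr e₁] at ha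
          rw [← C.hybrid_congr e₂] at ha'
          exact (b.2).2.2.1 z₁ h₁ z₂ h₂ hne' a ha ha'
        · intro z hz
          have he : (az z).1 z = csup z := rfl
          rw [← C.hybrid_congr he]
          exact ((az z).2).2.2.2.1 z hz
        · -- uniqueness of the deficient vertex at the sup
          have key : ∀ w, C.Defi csup w →
              ∃ aw ∈ CC, ∀ b ∈ CC, stLe aw.1 b.1 → C.Defi b.1 w := by
            intro w hw
            set Zw : Set V :=
              {z | z ∈ C.SM ∧ ∃ a, a ∈ (C.O z).verts ∧ a ∈ (C.rT w).verts} ∪ {w} with hZw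
            have hfinZ : Zw.Finite := by
              apply Set.Finite.union _ (Set.finite_singleton w)
              set S0 := {z | z ∈ C.SM ∧ ∃ a, a ∈ (C.O z).verts ∧ a ∈ (C.rT w).verts}
              set f : V → V := fun z =>
                if h : ∃ a, a ∈ (C.O z).verts ∧ a ∈ (C.rT w).verts then h.choose else z
                with hf
              have hfmem : ∀ z ∈ S0, f z ∈ (C.O z).verts ∧ f z ∈ (C.rT w).verts := by
                intro z hz
                have h := hz.2
                simp only [hf, dif_pos h]
                exact h.choose_spec
              apply Set.Finite.of_finite_image (f := f)
              · apply Set.Finite.subset (C.rT w).verts.finite_toSet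
                rintro _ ⟨z, hz, rfl⟩
                exact (hfmem z hz).2
              · intro z₁ h₁ z₂ h₂ hf12
                by_contra hne'
                exact C.O_disj h₁.1 h₂.1 hne' (hfmem z₁ h₁).1 (hf12 ▸ (hfmem z₂ h₂).1)
            obtain ⟨aw, hawCC, hawub⟩ := hfinub (az '' Zw) (hfinZ.image az)
              (by rintro _ ⟨z, hz, rfl⟩; exact hazCC z)
            refine ⟨aw, hawCC, ?_⟩
            intro b hb hble
            refine ⟨hw.1, ?_⟩
            rintro (⟨hwSM, hbw⟩ | ⟨z, hz, k, hbz⟩)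
            · have hwZ : w ∈ Zw := Or.inr rfl
              have hbwsup : b.1 w = csup w :=
                hstab w b hb (stLe_trans (hawub (az w) ⟨w, hwZ, rfl⟩) hble)
              exact hw.2 (Or.inl ⟨hwSM, by rw [← hbwsup]; exact hbw⟩)
            · have hcut := (b.2).2.1 z w k hbz
              have hzZ : z ∈ Zw := Or.inl ⟨hz, C.cutV z k,
                C.cutV_mem_verts hcut.2.2.1, hcut.2.2.2⟩
              have hbzsup : b.1 z = csup z :=
                hstab z b hb (stLe_trans (hawub (az z) ⟨z, hzZ, rfl⟩) hble)
              exact hw.2 (Or.inr ⟨z, hz, k, by rw [← hbzsup]; exact hbz⟩)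
          intro w w' hw hw'
          obtain ⟨a1, ha1, h1⟩ := key w hw
          obtain ⟨a2, ha2, h2⟩ := key w' hw'
          obtain ⟨b, hbCC, hb1, hb2⟩ := hpair a1 a2 ha1 ha2
          exact (b.2).2.2.2.2 w w' (h1 b hbCC hb1) (h2 b hbCC hb2)
      exact ⟨⟨csup, hvalsup⟩, hub⟩
    · exact ⟨⟨fun _ => none, C.valid_base⟩, fun a ha => absurd ⟨a, ha⟩ hne⟩
  obtain ⟨m, hmax⟩ := exists_maximal_of_chains_bounded hbdd
    (fun hab hbc => stLe_trans hab hbc)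
  have hval := m.2
  by_cases hdefi : ∃ w, C.Defi m.1 w
  · obtain ⟨dd, hdd⟩ := hdefi
    have huni : ∀ w, C.Defi m.1 w → w = dd := fun w hw => hval.2.2.2.2 w dd hw hdd
    by_cases hhit : ∃ a ∈ (C.rT dd).verts, a ∈ {a | ∃ z ∈ C.SM, a ∈ C.hybrid m.1 z}
    · obtain ⟨c', hval', hle, hnle⟩ := C.step hval hdd huni hhit
      exact hnle (hmax ⟨c', hval'⟩ hle)
    · apply C.one_defi_nohit_false hval hdd huni
      intro a ha z hz hmem
      exact hhit ⟨a, ha, z, hz, hmem⟩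
  · push_neg at hdefi
    exact C.no_defi_false hval hdefi

end Setup
end StmtAux
/-- If `X - x` is incompressible to `Y - y` and `X` is joinable to `Y`, then `X` is
incompressible to `Y`. -/
theorem stmt7 {V : Type u} (E : Set (V × V)) (X Y : Set V)
    (hX : ∀ e ∈ E, e.2 ∉ X) (hY : ∀ e ∈ E, e.1 ∉ Y)
    (x : V) (hx : x ∈ X) (y : V) (hy : y ∈ Y)
    (hinc : Incompressible E (X \ {x}) (Y \ {y})) (hjoin : Joinable E X Y) :
    Incompressible E X Y := by
  classical
  open StmtAux in
  obtain ⟨hinc_join, hinc_onto⟩ := hinc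
  obtain ⟨T, ⟨hTpath, hTdisj⟩, hTinit⟩ := hinc_join
  refine ⟨hjoin, ?_⟩
  intro P hPsys hPinit
  obtain ⟨hPpath, hPdisj⟩ := hPsys
  obtain ⟨px, hpxP, hpxs⟩ := mem_initVerts.mp (show x ∈ initVerts P by rw [hPinit]; exact hx)
  -- removing the path from `x` (when no other path ends at `y`) yields a witness for
  -- the incompressibility of `X-x` to `Y-y`
  have hremove : ∀ p₀ ∈ P, (∀ p ∈ P, p ≠ p₀ → p.last ≠ y) → p₀.start = x →
      termVerts (P \ {p₀}) = Y \ {y} := by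
    intro p₀ hp₀ hnoy hp₀s
    apply hinc_onto
    · constructor
      · intro p hp
        refine isXYPath_of hX hY Set.diff_subset Set.diff_subset ?_ ?_
        · refine ⟨(hPpath p hp.1).1, ?_⟩
          intro hps
          have hpp : p = p₀ := start_inj hPdisj hp.1 hp₀ (by rw [hp₀s]; exact hps)
          exact hp.2 hpp
        · exact ⟨(hPpath p hp.1).2.1, hnoy p hp.1 hp.2⟩
      · exact hPdisj.mono Set.diff_subset
    · ext z
      rw [mem_initVerts]
      constructor
      · rintro ⟨p, hp, rfl⟩
        refine ⟨(hPpath p hp.1).1, ?_⟩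
        intro hz
        exact hp.2 (start_inj hPdisj hp.1 hp₀ (by rw [hp₀s]; exact hz))
      · rintro ⟨hzX, hzx⟩
        obtain ⟨p, hp, hps⟩ := mem_initVerts.mp (show z ∈ initVerts P by rw [hPinit]; exact hzX)
        refine ⟨p, ⟨hp, ?_⟩, hps⟩
        intro hpp
        rw [Set.mem_singleton_iff] at hpp
        subst hpp
        exact hzx (show z ∈ ({x} : Set V) by rw [← hps, hp₀s]; exact rfl)
  -- some path of `P` ends at `y`
  have hyterm : y ∈ termVerts P := by
    by_contra hyt
    have hterm := hremove px hpxP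
      (fun p hp _ hpl => hyt (mem_termVerts.mpr ⟨p, hp, hpl⟩)) hpxs
    have hpxl : px.last ∈ Y \ {y} := by
      refine ⟨(hPpath px hpxP).2.1, ?_⟩
      intro h
      rw [Set.mem_singleton_iff] at h
      exact hyt (mem_termVerts.mpr ⟨px, hpxP, h⟩)
    rw [← hterm] at hpxl
    obtain ⟨p', hp', hpl'⟩ := mem_termVerts.mp hpxl
    have hne : p' ≠ px := fun h => hp'.2 (h ▸ rfl)
    apply pairwise_not_mem hPdisj hp'.1 hpxP hne (a := px.last) ?_ (last_mem_verts px)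
    rw [← hpl']
    exact last_mem_verts p'
  obtain ⟨q, hqP, hql⟩ := mem_termVerts.mp hyterm
  apply Set.Subset.antisymm
  · rintro b ⟨p, hp, rfl⟩
    exact (hPpath p hp).2.1
  by_cases hqs : q.start = x
  · -- the path ending at `y` starts at `x`
    have hnoy : ∀ p ∈ P, p ≠ q → p.last ≠ y := by
      intro p hp hne hpl
      apply pairwise_not_mem hPdisj hp hqP hne (a := y) ?_ ?_
      · rw [← hpl]; exact last_mem_verts p
      · rw [← hql]; exact last_mem_verts q
    have hterm := hremove q hqP hnoy hqs
    intro b hbY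
    by_cases hby : b = y
    · subst hby
      exact mem_termVerts.mpr ⟨q, hqP, hql⟩
    · have hb : b ∈ termVerts (P \ {q}) := by rw [hterm]; exact ⟨hbY, hby⟩
      obtain ⟨p, hp, hpl⟩ := mem_termVerts.mp hb
      exact mem_termVerts.mpr ⟨p, hp.1, hpl⟩
  · -- the hard case
    intro b hbY
    by_contra hbn
    exact Setup.derive_false
      { E := E, X := X, Y := Y, hX := hX, hY := hY, x := x, y := y, xx := q.start,
        ystar := b, hxX := hx, hyY := hy, P := P, hPpath := hPpath, hPdisj := hPdisj,
        hPinit := hPinit, px := px, q := q, hpxP := hpxP, hpxs := hpxs, hqP := hqP,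
        hql := hql, hqs := rfl, hxxne := hqs, hystarY := hbY, hystar := hbn,
        T := T, hTpath := hTpath, hTdisj := hTdisj, hTinit := hTinit,
        oracle := hinc_onto }
end

section
/- Let D be a rooted digraph with root r, let x be a vertex distinct from r, and let 𝒮 be a nonempty collection of subsets of V(D)−r such that every S ∈ 𝒮 separates x from r. Then the set of those vertices s ∈ ⋃𝒮 that are separated from r by every member of 𝒮 also separates x from r. -/
/-!  Common framework: digraphs as edge sets on a vertex type, directed paths,
path-systems, separations, flames and largeness. -/

universe u

variable {V : Type u}

/-! ### Auxiliary path constructions -/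

namespace Dipath
variable {E : Set (V × V)}

lemma verts_ne_nil (p : Dipath E) : p.verts ≠ [] := List.cons_ne_nil _ _
lemma chain' (p : Dipath E) : p.verts.IsChain (fun a b => (a, b) ∈ E) := p.chain
lemma last_eq (p : Dipath E) : p.last = p.verts.getLast p.verts_ne_nil := rfl
lemma start_eq (p : Dipath E) : p.start = p.verts.head p.verts_ne_nil := rfl
lemma mem_support (p : Dipath E) {v : V} : v ∈ p.support ↔ v ∈ p.verts := Iff.rfl
lemma last_mem_support (p : Dipath E) : p.last ∈ p.support := by
  rw [mem_support, last_eq]; exact List.getLast_mem _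
lemma head_of_prefix {α : Type*} {l₁ l₂ : List α} (h : l₁ <+: l₂) (h₁ : l₁ ≠ [])
    (h₂ : l₂ ≠ []) : l₂.head h₂ = l₁.head h₁ := by
  obtain ⟨t, rfl⟩ := h
  exact List.head_append_of_ne_nil h₁

def ofList (E : Set (V × V)) : (l : List V) → l ≠ [] →
    l.IsChain (fun a b => (a, b) ∈ E) → l.Nodup → Dipath E
  | a :: t, _, hc, hn => ⟨a, t, hc, hn⟩
  | [], h, _, _ => absurd rfl h
lemma ofList_verts (E : Set (V × V)) (l : List V) (h : l ≠ [])
    (hc : l.IsChain (fun a b => (a, b) ∈ E)) (hn : l.Nodup) :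
    (ofList E l h hc hn).verts = l := by
  cases l with
  | nil => exact absurd rfl h
  | cons a t => rfl
lemma ofList_start (E : Set (V × V)) (l : List V) (h : l ≠ [])
    (hc : l.IsChain (fun a b => (a, b) ∈ E)) (hn : l.Nodup) :
    (ofList E l h hc hn).start = l.head h := by
  cases l with
  | nil => exact absurd rfl h
  | cons a t => rfl
lemma ofList_last (E : Set (V × V)) (l : List V) (h : l ≠ [])
    (hc : l.IsChain (fun a b => (a, b) ∈ E)) (hn : l.Nodup) :
    (ofList E l h hc hn).last = l.getLast h := by
  cases l with
  | nil => exact absurd rfl h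
  | cons a t => rfl

/-- The single-vertex path. -/
def single (E : Set (V × V)) (r : V) : Dipath E :=
  ⟨r, [], List.Chain.nil, List.nodup_singleton r⟩
lemma single_last (r : V) : (single E r).last = r := rfl
lemma single_support (r : V) : (single E r).support = {r} := by
  ext w; simp [support, verts, single]

/-- Extend a path by one new vertex. -/
def concat (p : Dipath E) (v : V) (he : (p.last, v) ∈ E) (hv : v ∉ p.support) : Dipath E :=
  ofList E (p.verts ++ [v]) (by simp)
    (p.chain'.append (List.isChain_singleton v) (by
      intro a ha b hb
      rw [List.getLast?_eq_getLast p.verts_ne_nil, Option.mem_some_iff] at ha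
      simp only [List.head?_cons, Option.mem_some_iff] at hb
      rw [← ha, ← hb, ← last_eq] at *
      exact he))
    (by
      rw [List.nodup_append]
      exact ⟨p.nodup, List.nodup_singleton v, by simpa [List.disjoint_singleton] using (fun a ha hav => hv (hav ▸ ha) : ∀ a ∈ p.verts, ¬a = v)⟩)
lemma concat_start (p : Dipath E) (v : V) (he : (p.last, v) ∈ E) (hv : v ∉ p.support) :
    (p.concat v he hv).start = p.start := by
  rw [concat, ofList_start, start_eq]
  exact (head_of_prefix ⟨[v], rfl⟩ p.verts_ne_nil (by simp)).symm
lemma concat_last (p : Dipath E) (v : V) (he : (p.last, v) ∈ E) (hv : v ∉ p.support) :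
    (p.concat v he hv).last = v := by
  rw [concat, ofList_last]
  exact List.getLast_concat
lemma concat_support (p : Dipath E) (v : V) (he : (p.last, v) ∈ E) (hv : v ∉ p.support)
    {w : V} (hw : w ∈ (p.concat v he hv).support) : w ∈ p.support ∨ w = v := by
  rw [mem_support, concat, ofList_verts, List.mem_append] at hw
  simpa [mem_support] using hw

/-- The prefix of a path up to (the first occurrence of) a vertex on it. -/
noncomputable def prefixUntilList (p : Dipath E) (v : V) : List V :=
  letI := Classical.decEq V
  p.verts.takeWhile (fun a => a ≠ v) ++ [v]
lemma prefixUntilList_prefix (p : Dipath E) {v : V} (hv : v ∈ p.support) :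
    p.prefixUntilList v <+: p.verts := by
  classical
  have hd : p.verts.dropWhile (fun a => a ≠ v) ≠ [] := by
    intro h
    have := List.dropWhile_eq_nil_iff.mp h v hv
    simp at this
  have hh : (p.verts.dropWhile (fun a => a ≠ v)).head hd = v := by
    have := List.dropWhile_get_zero_not (fun a => a ≠ v) p.verts
      (by cases h : p.verts.dropWhile (fun a => a ≠ v) with
          | nil => exact absurd h hd
          | cons a t => simp [h])
    simp only [List.get_eq_getElem, ← List.head_eq_getElem hd] at this
    simpa using this
  refine ⟨(p.verts.dropWhile (fun a => a ≠ v)).tail, ?_⟩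
  rw [prefixUntilList]
  conv_rhs => rw [← List.takeWhile_append_dropWhile (p := fun a => a ≠ v) (l := p.verts)]
  rw [List.append_assoc]
  congr 1
  rw [List.singleton_append]
  set l := p.verts.dropWhile (fun a => a ≠ v) with hl
  rw [← hh]
  exact (List.cons_head_tail _)
noncomputable def prefixUntil (p : Dipath E) (v : V) (hv : v ∈ p.support) : Dipath E :=
  ofList E (p.prefixUntilList v) (by simp [prefixUntilList])
    (p.chain'.prefix (p.prefixUntilList_prefix hv))
    (((p.prefixUntilList_prefix hv).sublist).nodup p.nodup)
lemma prefixUntil_start (p : Dipath E) (v : V) (hv : v ∈ p.support) :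
    (p.prefixUntil v hv).start = p.start := by
  rw [prefixUntil, ofList_start, start_eq]
  exact (head_of_prefix (p.prefixUntilList_prefix hv) _ _).symm
lemma prefixUntil_last (p : Dipath E) (v : V) (hv : v ∈ p.support) :
    (p.prefixUntil v hv).last = v := by
  rw [prefixUntil, ofList_last]
  exact List.getLast_concat
lemma prefixUntil_support (p : Dipath E) (v : V) (hv : v ∈ p.support) :
    (p.prefixUntil v hv).support ⊆ p.support := by
  intro w hw
  rw [mem_support, prefixUntil, ofList_verts] at hw
  exact (p.prefixUntilList_prefix hv).sublist.mem hw

/-- Remove the last vertex of a path with at least one edge. -/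
lemma dropLast_ne_nil (p : Dipath E) (h : p.rest ≠ []) : p.verts.dropLast ≠ [] := by
  cases hr : p.rest with
  | nil => exact absurd hr h
  | cons a t => simp [verts, hr]
lemma verts_eq_dropLast_append (p : Dipath E) :
    p.verts = p.verts.dropLast ++ [p.last] := by
  rw [last_eq, List.dropLast_append_getLast]
def dropLastPath (p : Dipath E) (h : p.rest ≠ []) : Dipath E :=
  ofList E p.verts.dropLast (p.dropLast_ne_nil h)
    (p.chain'.prefix ⟨[p.last], (p.verts_eq_dropLast_append).symm⟩)
    ((List.dropLast_sublist _).nodup p.nodup)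
lemma dropLastPath_start (p : Dipath E) (h : p.rest ≠ []) :
    (p.dropLastPath h).start = p.start := by
  rw [dropLastPath, ofList_start, start_eq]
  exact (head_of_prefix (List.dropLast_prefix _) (p.dropLast_ne_nil h) p.verts_ne_nil).symm
lemma dropLastPath_support (p : Dipath E) (h : p.rest ≠ []) :
    (p.dropLastPath h).support ⊆ p.support := by
  intro w hw
  rw [mem_support, dropLastPath, ofList_verts] at hw
  exact (List.dropLast_sublist _).mem hw
lemma dropLastPath_edge (p : Dipath E) (h : p.rest ≠ []) :
    ((p.dropLastPath h).last, p.last) ∈ E := by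
  have hc := p.chain'
  rw [p.verts_eq_dropLast_append, List.isChain_append] at hc
  refine hc.2.2 _ ?_ _ ?_
  · rw [List.getLast?_eq_getLast (p.dropLast_ne_nil h), Option.mem_some_iff,
      dropLastPath, ofList_last]
  · simp
lemma dropLastPath_length (p : Dipath E) (h : p.rest ≠ []) :
    (p.dropLastPath h).verts.length < p.verts.length := by
  rw [dropLastPath, ofList_verts]
  have := p.verts_ne_nil
  rw [List.length_dropLast]
  have : 0 < p.verts.length := List.length_pos_iff.mpr p.verts_ne_nil
  omega
end Dipath

/-- If every member of a nonempty family `𝒮` of vertex sets (avoiding `r`) separates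
`x` from `r`, then so does the set of those vertices of `⋃ 𝒮` that are separated
from `r` by every member of `𝒮`. -/
theorem stmt12 {V : Type u} (E : Set (V × V)) (r x : V) (hx : x ≠ r)
    (𝒮 : Set (Set V)) (hne : 𝒮.Nonempty)
    (h𝒮 : ∀ S ∈ 𝒮, r ∉ S ∧ SeparatesFrom E r S x) :
    SeparatesFrom E r {s | s ∈ ⋃₀ 𝒮 ∧ ∀ S ∈ 𝒮, SeparatesFrom E r S s} x := by
  classical
  intro p hps hpl
  -- `r` is not separated from itself by any member of `𝒮`
  have hr : ¬ (∀ S ∈ 𝒮, SeparatesFrom E r S r) := by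
    intro h
    obtain ⟨S, hS⟩ := hne
    obtain ⟨w, hw1, hw2⟩ := h S hS (Dipath.single E r) rfl rfl
    rw [Dipath.single_support] at hw1
    exact (h𝒮 S hS).1 (hw1 ▸ hw2)
  -- key step: separatedness propagates backwards along an edge
  have key : ∀ u y : V, (∀ S ∈ 𝒮, SeparatesFrom E r S y) → y ∉ ⋃₀ 𝒮 → (u, y) ∈ E →
      ∀ S ∈ 𝒮, SeparatesFrom E r S u := by
    intro u y hy hyn he S hS q hq1 hq2
    by_cases hyq : y ∈ q.support
    · obtain ⟨w, hw1, hw2⟩ := hy S hS (q.prefixUntil y hyq)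
        ((q.prefixUntil_start y hyq).trans hq1) (q.prefixUntil_last y hyq)
      exact ⟨w, q.prefixUntil_support y hyq hw1, hw2⟩
    · have he' : (q.last, y) ∈ E := by rw [hq2]; exact he
      obtain ⟨w, hw1, hw2⟩ := hy S hS (q.concat y he' hyq)
        ((q.concat_start y he' hyq).trans hq1) (q.concat_last y he' hyq)
      rcases q.concat_support y he' hyq hw1 with h | rfl
      · exact ⟨w, h, hw2⟩
      · exact absurd ⟨S, hS, hw2⟩ hyn
  -- main induction on the length of the path
  have main : ∀ n (q : Dipath E), q.verts.length ≤ n → q.start = r →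
      (∀ S ∈ 𝒮, SeparatesFrom E r S q.last) →
      (q.support ∩ {s | s ∈ ⋃₀ 𝒮 ∧ ∀ S ∈ 𝒮, SeparatesFrom E r S s}).Nonempty := by
    intro n
    induction n with
    | zero =>
      intro q hlen _ _
      have := List.length_pos_iff.mpr q.verts_ne_nil
      omega
    | succ n ih =>
      intro q hlen hqs hql
      by_cases hmem : q.last ∈ ⋃₀ 𝒮
      · exact ⟨q.last, q.last_mem_support, hmem, hql⟩
      · have hrest : q.rest ≠ [] := by
          intro h0
          apply hr
          have hlr : q.last = r := by
            rw [← hqs]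
            simp [Dipath.last, h0]
          exact hlr ▸ hql
        have hSep' : ∀ S ∈ 𝒮, SeparatesFrom E r S (q.dropLastPath hrest).last :=
          key _ _ hql hmem (q.dropLastPath_edge hrest)
        obtain ⟨w, hw1, hw2⟩ := ih (q.dropLastPath hrest)
          (by have := q.dropLastPath_length hrest; omega)
          ((q.dropLastPath_start hrest).trans hqs) hSep'
        exact ⟨w, q.dropLastPath_support hrest hw1, hw2⟩
  exact main p.verts.length p le_rfl hps (fun S hS => hpl ▸ (h𝒮 S hS).2)
end

section
/- There exists a rooted digraph D with no subgraph-maximal vertex-flame: explicitly, let D have root r and disjoint vertex sets V₀, V₁, V₂ with V₀, V₂ countably infinite and V₁ uncountable, with all edges rv for v ∈ V₀, all edges from V₀ to V₁, and all edges from V₁ to V₂. Then the set of vertex-flames contained in D, ordered by the subgraph relation, has no maximal element. -/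
/-!  Common framework: digraphs as edge sets on a vertex type, directed paths,
path-systems, separations, flames and largeness. -/

universe u

variable {V : Type u}

/-- The vertex type of the counterexample digraph: a root, a countably infinite
level `V₀ = ℕ`, an uncountable level `V₁ = (ℕ → Bool)`, and a countably infinite
level `V₂ = ℕ`. -/
abbrev VEx : Type := Option (ℕ ⊕ ((ℕ → Bool) ⊕ ℕ))

/-- The edge set of the counterexample: all edges from the root to `V₀`, all edges
from `V₀` to `V₁`, and all edges from `V₁` to `V₂`. -/
def EEx : Set (VEx × VEx) :=
  {e | (∃ n : ℕ, e = (none, some (Sum.inl n))) ∨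
       (∃ (n : ℕ) (f : ℕ → Bool), e = (some (Sum.inl n), some (Sum.inr (Sum.inl f)))) ∨
       (∃ (f : ℕ → Bool) (m : ℕ), e = (some (Sum.inr (Sum.inl f)), some (Sum.inr (Sum.inr m))))}

-- ==== auxiliary development ====
section AuxGen
variable {V : Type u}

def Dipath.lift {E E' : Set (V × V)} (h : E ⊆ E') (p : Dipath E) : Dipath E' :=
  ⟨p.start, p.rest, List.IsChain.imp (fun _ _ hab => h hab) p.chain, p.nodup⟩

lemma gset_mono {E E' : Set (V × V)} (h : E ⊆ E') (r v : V) :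
    GSet E r v ⊆ GSet E' r v := by
  rintro I ⟨P, ⟨h1, h2⟩, rfl⟩
  refine ⟨Dipath.lift h '' P, ⟨?_, ?_⟩, ?_⟩
  · rintro p ⟨q, hq, rfl⟩
    exact h1 q hq
  · rintro p ⟨q, hq, rfl⟩ p' ⟨q', hq', rfl⟩ hne
    have hqq : q ≠ q' := by rintro rfl; exact hne rfl
    exact h2 hq hq' hqq
  · ext e
    constructor
    · rintro ⟨p, ⟨q, hq, rfl⟩, hl⟩
      exact ⟨q, hq, hl⟩
    · rintro ⟨q, hq, hl⟩
      exact ⟨_, ⟨q, hq, rfl⟩, hl⟩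

lemma inEdges_insert_ne {E : Set (V × V)} {e : V × V} {v : V} (h : e.2 ≠ v) :
    inEdges (insert e E) v = inEdges E v := by
  ext x
  simp only [inEdges, Set.mem_setOf_eq, Set.mem_insert_iff]
  constructor
  · rintro ⟨(rfl | hx), h2⟩
    · exact absurd h2 h
    · exact ⟨hx, h2⟩
  · rintro ⟨hx, h2⟩
    exact ⟨Or.inr hx, h2⟩

lemma inEdges_insert_self {E : Set (V × V)} {e : V × V} :
    inEdges (insert e E) e.2 = insert e (inEdges E e.2) := by
  ext x
  simp only [inEdges, Set.mem_setOf_eq, Set.mem_insert_iff]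
  constructor
  · rintro ⟨(rfl | hx), h2⟩
    · exact Or.inl rfl
    · exact Or.inr ⟨hx, h2⟩
  · rintro (rfl | ⟨hx, h2⟩)
    · exact ⟨Or.inl rfl, rfl⟩
    · exact ⟨Or.inr hx, h2⟩

end AuxGen


abbrev w0 (n : ℕ) : VEx := some (Sum.inl n)
abbrev w1 (g : ℕ → Bool) : VEx := some (Sum.inr (Sum.inl g))
abbrev w2 (m : ℕ) : VEx := some (Sum.inr (Sum.inr m))

lemma e01_mem (n : ℕ) : ((none : VEx), w0 n) ∈ EEx := Or.inl ⟨n, rfl⟩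
lemma e12_mem (n : ℕ) (g : ℕ → Bool) : (w0 n, w1 g) ∈ EEx := Or.inr (Or.inl ⟨n, g, rfl⟩)
lemma e23_mem (g : ℕ → Bool) (m : ℕ) : (w1 g, w2 m) ∈ EEx := Or.inr (Or.inr ⟨g, m, rfl⟩)

lemma head_v0 {E : Set (VEx × VEx)} (hE : E ⊆ EEx) {x : VEx} {n : ℕ}
    (h : (x, w0 n) ∈ E) : x = none := by
  rcases hE h with ⟨n', he⟩ | ⟨n', g', he⟩ | ⟨g', m', he⟩
  · exact congrArg Prod.fst he
  · exact absurd (congrArg Prod.snd he) (by simp)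
  · exact absurd (congrArg Prod.snd he) (by simp)

lemma head_v1 {E : Set (VEx × VEx)} (hE : E ⊆ EEx) {x : VEx} {g : ℕ → Bool}
    (h : (x, w1 g) ∈ E) : ∃ n, x = w0 n := by
  rcases hE h with ⟨n', he⟩ | ⟨n', g', he⟩ | ⟨g', m', he⟩
  · exact absurd (congrArg Prod.snd he) (by simp)
  · exact ⟨n', congrArg Prod.fst he⟩
  · exact absurd (congrArg Prod.snd he) (by simp)

lemma head_v2 {E : Set (VEx × VEx)} (hE : E ⊆ EEx) {x : VEx} {m : ℕ}
    (h : (x, w2 m) ∈ E) : ∃ g, x = w1 g := by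
  rcases hE h with ⟨n', he⟩ | ⟨n', g', he⟩ | ⟨g', m', he⟩
  · exact absurd (congrArg Prod.snd he) (by simp)
  · exact absurd (congrArg Prod.snd he) (by simp)
  · exact ⟨g', congrArg Prod.fst he⟩

def path1 {E : Set (VEx × VEx)} (n : ℕ) (h : ((none : VEx), w0 n) ∈ E) : Dipath E :=
  ⟨none, [w0 n], List.Chain.cons h List.Chain.nil, by simp⟩

def path2 {E : Set (VEx × VEx)} (n : ℕ) (g : ℕ → Bool)
    (h1 : ((none : VEx), w0 n) ∈ E) (h2 : (w0 n, w1 g) ∈ E) : Dipath E :=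
  ⟨none, [w0 n, w1 g], List.Chain.cons h1 (List.Chain.cons h2 List.Chain.nil), by simp⟩

def path3 {E : Set (VEx × VEx)} (n : ℕ) (g : ℕ → Bool) (m : ℕ)
    (h1 : ((none : VEx), w0 n) ∈ E) (h2 : (w0 n, w1 g) ∈ E) (h3 : (w1 g, w2 m) ∈ E) :
    Dipath E :=
  ⟨none, [w0 n, w1 g, w2 m],
    List.Chain.cons h1 (List.Chain.cons h2 (List.Chain.cons h3 List.Chain.nil)), by simp⟩

lemma shape {E : Set (VEx × VEx)} (hE : E ⊆ EEx) (p : Dipath E) (hs : p.start = none) :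
    p.rest = [] ∨ (∃ n, p.rest = [w0 n]) ∨ (∃ n g, p.rest = [w0 n, w1 g]) ∨
      (∃ n g m, p.rest = [w0 n, w1 g, w2 m]) := by
  obtain ⟨s, l, ch, nd⟩ := p
  simp only at hs ⊢
  subst hs
  rcases l with _ | ⟨a, l⟩
  · exact Or.inl rfl
  change List.IsChain _ (none :: a :: l) at ch
  rw [List.chain_cons] at ch
  obtain ⟨h1, ch⟩ := ch
  obtain ⟨n, rfl⟩ : ∃ n, a = w0 n := by
    rcases hE h1 with ⟨n', he⟩ | ⟨n', g', he⟩ | ⟨g', m', he⟩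
    · exact ⟨n', congrArg Prod.snd he⟩
    · exact absurd (congrArg Prod.fst he) (by simp)
    · exact absurd (congrArg Prod.fst he) (by simp)
  rcases l with _ | ⟨b, l⟩
  · exact Or.inr (Or.inl ⟨n, rfl⟩)
  rw [List.chain_cons] at ch
  obtain ⟨h2, ch⟩ := ch
  obtain ⟨g, rfl⟩ : ∃ g, b = w1 g := by
    rcases hE h2 with ⟨n', he⟩ | ⟨n', g', he⟩ | ⟨g', m', he⟩
    · exact absurd (congrArg Prod.fst he) (by simp)
    · exact ⟨g', congrArg Prod.snd he⟩
    · exact absurd (congrArg Prod.fst he) (by simp)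
  rcases l with _ | ⟨c, l⟩
  · exact Or.inr (Or.inr (Or.inl ⟨n, g, rfl⟩))
  rw [List.chain_cons] at ch
  obtain ⟨h3, ch⟩ := ch
  obtain ⟨m, rfl⟩ : ∃ m, c = w2 m := by
    rcases hE h3 with ⟨n', he⟩ | ⟨n', g', he⟩ | ⟨g', m', he⟩
    · exact absurd (congrArg Prod.fst he) (by simp)
    · exact absurd (congrArg Prod.fst he) (by simp)
    · exact ⟨m', congrArg Prod.snd he⟩
  rcases l with _ | ⟨d, l⟩
  · exact Or.inr (Or.inr (Or.inr ⟨n, g, m, rfl⟩))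
  rw [List.chain_cons] at ch
  obtain ⟨h4, ch⟩ := ch
  rcases hE h4 with ⟨n', he⟩ | ⟨n', g', he⟩ | ⟨g', m', he⟩
  · exact absurd (congrArg Prod.fst he) (by simp)
  · exact absurd (congrArg Prod.fst he) (by simp)
  · exact absurd (congrArg Prod.fst he) (by simp)

lemma shape_of_lastEdge_v2 {E : Set (VEx × VEx)} (hE : E ⊆ EEx) (p : Dipath E)
    (hs : p.start = none) {g : ℕ → Bool} {m : ℕ}
    (h : p.lastEdge? = some (w1 g, w2 m)) : ∃ n, p.rest = [w0 n, w1 g, w2 m] := by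
  rcases shape hE p hs with h0 | ⟨n, h1⟩ | ⟨n, g', h2⟩ | ⟨n, g', m', h3⟩
  · simp [Dipath.lastEdge?, Dipath.edges, Dipath.verts, h0] at h
  · simp [Dipath.lastEdge?, Dipath.edges, Dipath.verts, h1, hs] at h
  · simp [Dipath.lastEdge?, Dipath.edges, Dipath.verts, h2, hs] at h
  · simp only [Dipath.lastEdge?, Dipath.edges, Dipath.verts, h3, hs] at h
    simp only [List.zip_cons_cons, List.zip_nil_right, List.getLast?_cons_cons,
      List.getLast?_singleton, Option.some.injEq, Prod.mk.injEq] at h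
    obtain ⟨h4, h5⟩ := h
    obtain rfl : g' = g := by simpa using h4
    obtain rfl : m' = m := by simpa using h5
    exact ⟨n, h3⟩



lemma not_countable_univ_funs : ¬ (Set.univ : Set (ℕ → Bool)).Countable := by
  rw [Set.countable_univ_iff]
  intro h
  classical
  have hinj : Function.Injective (fun (s : Set ℕ) (n : ℕ) => decide (n ∈ s)) := by
    intro s t hst
    ext n
    simpa using congrFun hst n
  have h2 : Countable (Set ℕ) := Function.Injective.countable hinj
  obtain ⟨f, hf⟩ := Countable.exists_injective_nat (Set ℕ)
  exact Function.cantor_injective f hf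



/-- The explicit rooted digraph `EEx` has no subgraph-maximal vertex-flame: every
vertex-flame contained in it can be properly extended to another vertex-flame. -/

theorem stmt19 :
    ∀ F ⊆ EEx, IsFlame F (none : VEx) →
      ∃ F' : Set (VEx × VEx), F' ⊆ EEx ∧ IsFlame F' (none : VEx) ∧ F ⊂ F' := by
  intro F hF hFl
  by_cases h1 : ∃ n : ℕ, ((none : VEx), w0 n) ∉ F
  · -- Case 1: add a missing root edge
    obtain ⟨n, hn⟩ := h1
    refine ⟨insert (none, w0 n) F, Set.insert_subset (e01_mem n) hF, ?_, Set.ssubset_insert hn⟩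
    intro v hv
    by_cases hveq : v = w0 n
    · subst hveq
      have hIe : inEdges (insert ((none : VEx), w0 n) F) (w0 n)
          = insert ((none : VEx), w0 n) (inEdges F (w0 n)) :=
        inEdges_insert_self
      have hFe : inEdges F (w0 n) = ∅ := by
        ext e
        simp only [inEdges, Set.mem_setOf_eq, Set.mem_empty_iff_false, iff_false, not_and]
        intro heF he2
        obtain ⟨x, y⟩ := e
        simp only at he2
        subst he2
        have := head_v0 hF heF
        subst this
        exact hn heF
      rw [hIe, hFe]
      refine ⟨{path1 n (Set.mem_insert _ _)}, ⟨?_, Set.pairwise_singleton _ _⟩, ?_⟩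
      · rintro p rfl
        exact ⟨rfl, rfl⟩
      · ext e
        constructor
        · rintro ⟨p, rfl, hl⟩
          have : e = ((none : VEx), w0 n) := by
            simpa [path1, Dipath.lastEdge?, Dipath.edges, Dipath.verts] using hl.symm
          simp [this]
        · intro he
          obtain rfl : e = ((none : VEx), w0 n) := by simpa using he
          exact ⟨path1 n (Set.mem_insert _ _), rfl, by simp [path1, Dipath.lastEdge?,
            Dipath.edges, Dipath.verts]⟩
    · have : inEdges (insert ((none : VEx), w0 n) F) v = inEdges F v :=
        inEdges_insert_ne (by simpa using Ne.symm hveq)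
      rw [this]
      exact gset_mono (Set.subset_insert _ _) _ _ (hFl v hv)
  push_neg at h1
  by_cases h2 : ∃ (n : ℕ) (g : ℕ → Bool), (w0 n, w1 g) ∉ F
  · -- Case 2: all root edges present, add a missing V₀ → V₁ edge
    obtain ⟨n, g, hng⟩ := h2
    have hsub : insert (w0 n, w1 g) F ⊆ EEx := Set.insert_subset (e12_mem n g) hF
    refine ⟨insert (w0 n, w1 g) F, hsub, ?_, Set.ssubset_insert hng⟩
    intro v hv
    by_cases hveq : v = w1 g
    · subst hveq
      have hmem0 : ∀ m : ℕ, ((none : VEx), w0 m) ∈ insert (w0 n, w1 g) F :=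
        fun m => Set.mem_insert_of_mem _ (h1 m)
      refine ⟨Set.range (fun t : {m : ℕ // (w0 m, w1 g) ∈ insert (w0 n, w1 g) F} =>
        path2 t.1 g (hmem0 t.1) t.2), ⟨?_, ?_⟩, ?_⟩
      · rintro p ⟨t, rfl⟩
        exact ⟨rfl, rfl⟩
      · rintro p ⟨t, rfl⟩ q ⟨u, rfl⟩ hne
        have htu : t.1 ≠ u.1 := by
          intro h
          apply hne
          have h2 : t = u := Subtype.ext h
          rw [h2]
        rintro x ⟨hx1, hx2⟩
        simp only [path2, Dipath.support, Dipath.verts, Set.mem_setOf_eq,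
          List.mem_cons, List.not_mem_nil, or_false] at hx1 hx2
        rcases hx1 with rfl | rfl | rfl
        · exact Set.mem_insert _ _
        · rcases hx2 with h | h | h
          · exact absurd h (by simp)
          · exact absurd (by simpa using h) htu
          · exact absurd h (by simp)
        · exact Set.mem_insert_of_mem _ rfl
      · ext e
        constructor
        · rintro ⟨p, ⟨t, rfl⟩, hl⟩
          have he : e = (w0 t.1, w1 g) := by
            simpa [path2, Dipath.lastEdge?, Dipath.edges, Dipath.verts] using hl.symm
          subst he
          exact ⟨t.2, rfl⟩
        · rintro ⟨heF, he2⟩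
          obtain ⟨x, y⟩ := e
          simp only at he2
          subst he2
          obtain ⟨m, rfl⟩ : ∃ m, x = w0 m := head_v1 hsub heF
          exact ⟨path2 m g (hmem0 m) heF, ⟨⟨m, heF⟩, rfl⟩,
            by simp [path2, Dipath.lastEdge?, Dipath.edges, Dipath.verts]⟩
    · rw [inEdges_insert_ne (show ((w0 n, w1 g).2 : VEx) ≠ v by simpa using Ne.symm hveq)]
      exact gset_mono (Set.subset_insert _ _) _ _ (hFl v hv)
  · -- Case 3: all edges into V₀ and V₁ present; add an edge into a vertex of V₂
    push_neg at h2
    obtain ⟨P, ⟨hPsl, hPpw⟩, hPt⟩ := hFl (w2 0) (by simp)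
    set S1 : Set (ℕ → Bool) := {g | (w1 g, w2 0) ∈ F} with hS1
    have key : ∀ g : S1, ∃ n : ℕ, ∃ p ∈ P, p.rest = [w0 n, w1 g.1, w2 0] := by
      rintro ⟨g, hg⟩
      have hmem : (w1 g, w2 0) ∈ termEdges P := by
        rw [hPt]
        exact ⟨hg, rfl⟩
      obtain ⟨p, hp, hl⟩ := hmem
      obtain ⟨n, hn⟩ := shape_of_lastEdge_v2 hF p (hPsl p hp).1 hl
      exact ⟨n, p, hp, hn⟩
    choose φ pf hpf hrest using key
    have hφinj : Function.Injective φ := by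
      intro a b hab
      by_contra hne
      have hpne : pf a ≠ pf b := by
        intro h
        apply hne
        have h2 : [w0 (φ a), w1 a.1, w2 0] = [w0 (φ b), w1 b.1, w2 0] := by
          rw [← hrest a, ← hrest b, h]
        simp only [List.cons.injEq] at h2
        exact Subtype.ext (by simpa using h2.2.1)
      have hsup : (pf a).support ∩ (pf b).support ⊆ {none, w2 0} :=
        hPpw (hpf a) (hpf b) hpne
      have hmema : (w0 (φ a) : VEx) ∈ (pf a).support := by
        simp [Dipath.support, Dipath.verts, hrest a]
      have hmemb : (w0 (φ a) : VEx) ∈ (pf b).support := by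
        simp [Dipath.support, Dipath.verts, hrest b, hab]
      have := hsup ⟨hmema, hmemb⟩
      simp at this
    have hS1c : S1.Countable := Set.countable_iff_exists_injective.mpr ⟨φ, hφinj⟩
    obtain ⟨f, hf⟩ : ∃ f : ℕ → Bool, f ∉ S1 := by
      by_contra hc
      push_neg at hc
      have : S1 = Set.univ := Set.eq_univ_of_forall hc
      exact not_countable_univ_funs (this ▸ hS1c)
    have hfF : (w1 f, w2 0) ∉ F := hf
    have hsub : insert (w1 f, w2 0) F ⊆ EEx := Set.insert_subset (e23_mem f 0) hF
    refine ⟨insert (w1 f, w2 0) F, hsub, ?_, Set.ssubset_insert hfF⟩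
    intro v hv
    by_cases hveq : v = w2 0
    · subst hveq
      set T : Set (ℕ → Bool) := insert f S1 with hT
      have hTc : T.Countable := hS1c.insert f
      obtain ⟨ι, hι⟩ := Set.countable_iff_exists_injective.mp hTc
      have hmemT : ∀ t : T, (w1 t.1, w2 0) ∈ insert (w1 f, w2 0) F := by
        rintro ⟨t, ht⟩
        rcases ht with rfl | ht
        · exact Set.mem_insert _ _
        · exact Set.mem_insert_of_mem _ ht
      refine ⟨Set.range (fun t : T => path3 (ι t) t.1 0
        (Set.mem_insert_of_mem _ (h1 (ι t))) (Set.mem_insert_of_mem _ (h2 (ι t) t.1))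
        (hmemT t)), ⟨?_, ?_⟩, ?_⟩
      · rintro p ⟨t, rfl⟩
        exact ⟨rfl, rfl⟩
      · rintro p ⟨t, rfl⟩ q ⟨u, rfl⟩ hne
        have htu : t ≠ u := by
          rintro rfl
          exact hne rfl
        have hιtu : ι t ≠ ι u := fun h => htu (hι h)
        have htu1 : t.1 ≠ u.1 := fun h => htu (Subtype.ext h)
        rintro x ⟨hx1, hx2⟩
        simp only [path3, Dipath.support, Dipath.verts, Set.mem_setOf_eq,
          List.mem_cons, List.not_mem_nil, or_false] at hx1 hx2
        rcases hx1 with rfl | rfl | rfl | rfl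
        · exact Set.mem_insert _ _
        · rcases hx2 with h | h | h | h
          · exact absurd h (by simp)
          · exact absurd (by simpa using h) hιtu
          · exact absurd h (by simp)
          · exact absurd h (by simp)
        · rcases hx2 with h | h | h | h
          · exact absurd h (by simp)
          · exact absurd h (by simp)
          · exact absurd (by simpa using h) htu1
          · exact absurd h (by simp)
        · exact Set.mem_insert_of_mem _ rfl
      · ext e
        constructor
        · rintro ⟨p, ⟨t, rfl⟩, hl⟩
          have he : e = (w1 t.1, w2 0) := by
            simpa [path3, Dipath.lastEdge?, Dipath.edges, Dipath.verts] using hl.symm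
          subst he
          exact ⟨hmemT t, rfl⟩
        · rintro ⟨heF, he2⟩
          obtain ⟨x, y⟩ := e
          simp only at he2
          subst he2
          obtain ⟨g, rfl⟩ : ∃ g, x = w1 g := head_v2 hsub heF
          have hgT : g ∈ T := by
            rcases heF with he | he
            · have : g = f := by
                simpa using congrArg Prod.fst he
              exact this ▸ Set.mem_insert _ _
            · exact Set.mem_insert_of_mem _ he
          exact ⟨path3 (ι ⟨g, hgT⟩) g 0 (Set.mem_insert_of_mem _ (h1 _))
            (Set.mem_insert_of_mem _ (h2 _ _)) (hmemT ⟨g, hgT⟩), ⟨⟨g, hgT⟩, rfl⟩,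
            by simp [path3, Dipath.lastEdge?, Dipath.edges, Dipath.verts]⟩
    · rw [inEdges_insert_ne (show ((w1 f, w2 0).2 : VEx) ≠ v by simpa using Ne.symm hveq)]
      exact gset_mono (Set.subset_insert _ _) _ _ (hFl v hv)
end
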